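/- arXiv:math/0304389 — 3 statements merged into one kernel-verified Lean document; each statement's English description precedes it below -/
import Mathlib

section
/- Let X and Y be compact metric spaces, μ a Borel probability measure on X, ν a Borel probability measure on Y, and c : X × Y → [0, +∞) a continuous cost function. Then the Kantorovich duality formula holds: min { ∫_{X×Y} c dγ : γ ∈ Π(μ,ν) } = sup { ∫_X h dμ + ∫_Y k dν : h ∈ C(X), k ∈ C(Y), h(x) + k(y) ≤ c(x,y) for all (x,y) ∈ X × Y }. -/
open MeasureTheory
open scoped ENNReal

open MeasureTheory TopologicalSpace Set
open scoped ENNReal NNReal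

noncomputable section

namespace KDuality

section RMK

variable {Z : Type*} [MetricSpace Z] [CompactSpace Z]

/-- Test functions for the Riesz content of a set `K`. -/
def testFns (K : Set Z) : Set C(Z, ℝ) := {f | (∀ z, 0 ≤ f z) ∧ ∀ z ∈ K, 1 ≤ f z}

lemma one_mem_testFns (K : Set Z) : (1 : C(Z, ℝ)) ∈ testFns K :=
  ⟨fun _ => zero_le_one, fun _ _ => le_rfl⟩

variable (Λ : C(Z, ℝ) →ₗ[ℝ] ℝ)

/-- The Riesz content of a set. -/
def rc (K : Set Z) : ℝ := sInf (Λ '' testFns K)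

lemma image_nonempty (K : Set Z) : (Λ '' testFns K).Nonempty :=
  ⟨Λ 1, ⟨1, one_mem_testFns K, rfl⟩⟩

variable {Λ}
variable (hΛ : ∀ f : C(Z, ℝ), (∀ z, 0 ≤ f z) → 0 ≤ Λ f)
include hΛ

lemma lam_mono {f g : C(Z, ℝ)} (h : ∀ z, f z ≤ g z) : Λ f ≤ Λ g := by
  have h0 : (0:ℝ) ≤ Λ (g - f) := hΛ _ (fun z => by
    simp only [ContinuousMap.sub_apply, sub_nonneg]; exact h z)
  rw [map_sub] at h0; linarith

lemma bddBelow_image (K : Set Z) : BddBelow (Λ '' testFns K) := by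
  refine ⟨0, ?_⟩
  rintro r ⟨f, hf, rfl⟩
  exact hΛ f hf.1

lemma rc_nonneg (K : Set Z) : 0 ≤ rc Λ K :=
  le_csInf (image_nonempty Λ K) (by rintro r ⟨f, hf, rfl⟩; exact hΛ f hf.1)

lemma rc_le {K : Set Z} {f : C(Z, ℝ)} (hf : f ∈ testFns K) : rc Λ K ≤ Λ f :=
  csInf_le (bddBelow_image hΛ K) ⟨f, hf, rfl⟩

lemma exists_testFn {K : Set Z} {ε : ℝ} (hε : 0 < ε) :
    ∃ f ∈ testFns K, Λ f < rc Λ K + ε := by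
  obtain ⟨r, ⟨f, hf, rfl⟩, hr⟩ := exists_lt_of_csInf_lt (image_nonempty Λ K)
    (lt_add_of_pos_right (rc Λ K) hε)
  exact ⟨f, hf, hr⟩

lemma rc_mono {K₁ K₂ : Set Z} (h : K₁ ⊆ K₂) : rc Λ K₁ ≤ rc Λ K₂ := by
  apply csInf_le_csInf (bddBelow_image hΛ K₁) (image_nonempty Λ K₂)
  rintro r ⟨f, hf, rfl⟩
  exact ⟨f, ⟨hf.1, fun z hz => hf.2 z (h hz)⟩, rfl⟩

lemma rc_sup_le (K₁ K₂ : Set Z) : rc Λ (K₁ ∪ K₂) ≤ rc Λ K₁ + rc Λ K₂ := by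
  refine le_of_forall_pos_le_add (fun ε hε => ?_)
  obtain ⟨f₁, hf₁, hΛ₁⟩ := exists_testFn hΛ (K := K₁) (half_pos hε)
  obtain ⟨f₂, hf₂, hΛ₂⟩ := exists_testFn hΛ (K := K₂) (half_pos hε)
  have hmem : f₁ + f₂ ∈ testFns (K₁ ∪ K₂) := by
    constructor
    · intro z; simpa using add_nonneg (hf₁.1 z) (hf₂.1 z)
    · rintro z (hz | hz)
      · simpa using le_add_of_le_of_nonneg (hf₁.2 z hz) (hf₂.1 z)
      · simpa using le_add_of_nonneg_of_le (hf₁.1 z) (hf₂.2 z hz)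
  calc rc Λ (K₁ ∪ K₂) ≤ Λ (f₁ + f₂) := rc_le hΛ hmem
    _ = Λ f₁ + Λ f₂ := map_add _ _ _
    _ ≤ rc Λ K₁ + rc Λ K₂ + ε := by linarith [hΛ₁, hΛ₂]

lemma rc_sup_disjoint {K₁ K₂ : Set Z} (hK₁ : IsClosed K₁) (hK₂ : IsClosed K₂)
    (hd : Disjoint K₁ K₂) : rc Λ (K₁ ∪ K₂) = rc Λ K₁ + rc Λ K₂ := by
  refine le_antisymm (rc_sup_le hΛ K₁ K₂) ?_
  obtain ⟨g, hg0, hg1, hg01⟩ := exists_continuous_zero_one_of_isClosed hK₂ hK₁ hd.symm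
  refine le_csInf (image_nonempty Λ _) ?_
  rintro r ⟨f, hf, rfl⟩
  have h₁ : f * g ∈ testFns K₁ := by
    constructor
    · intro z; exact mul_nonneg (hf.1 z) (hg01 z).1
    · intro z hz
      have : g z = 1 := hg1 hz
      simpa [this] using hf.2 z (Or.inl hz)
  have h₂ : f * (1 - g) ∈ testFns K₂ := by
    constructor
    · intro z
      simp only [ContinuousMap.mul_apply, ContinuousMap.sub_apply, ContinuousMap.one_apply]
      exact mul_nonneg (hf.1 z) (by linarith [(hg01 z).2])
    · intro z hz
      have : g z = 0 := hg0 hz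
      simp only [ContinuousMap.mul_apply, ContinuousMap.sub_apply, ContinuousMap.one_apply, this]
      simpa using hf.2 z (Or.inr hz)
  have hsum : f * g + f * (1 - g) = f := by ext z; simp; ring
  calc rc Λ K₁ + rc Λ K₂ ≤ Λ (f * g) + Λ (f * (1 - g)) :=
        add_le_add (rc_le hΛ h₁) (rc_le hΛ h₂)
    _ = Λ (f * g + f * (1 - g)) := (map_add _ _ _).symm
    _ = Λ f := by rw [hsum]

/-- The Riesz content as a `Content`. -/
def rieszC : Content Z where
  toFun K := ⟨rc Λ K, rc_nonneg hΛ K⟩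
  mono' K₁ K₂ h := rc_mono hΛ h
  sup_disjoint' K₁ K₂ hd h₁ h₂ := by
    ext1
    exact rc_sup_disjoint hΛ h₁ h₂ hd
  sup_le' K₁ K₂ := by
    apply NNReal.coe_le_coe.1
    push_cast
    exact rc_sup_le hΛ K₁ K₂

lemma rieszC_apply (K : Compacts Z) :
    (rieszC hΛ) K = ENNReal.ofReal (rc Λ K) := by
  change ENNReal.ofNNReal (⟨rc Λ K, rc_nonneg hΛ K⟩ : ℝ≥0) = _
  exact ENNReal.ofReal_coe_nnreal.symm


lemma rieszC_regular : (rieszC hΛ).ContentRegular := by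
  intro K
  refine le_antisymm
    (le_iInf₂ fun K' hK' => (rieszC hΛ).mono K K' (hK'.trans interior_subset)) ?_
  refine ENNReal.le_of_forall_pos_le_add fun ε hε _ => ?_
  have hεr : (0:ℝ) < (ε:ℝ) := hε
  obtain ⟨f, hf, hΛf⟩ := exists_testFn hΛ (K := (K : Set Z)) (half_pos hεr)
  have hrc0 : (0:ℝ) ≤ rc Λ (K : Set Z) := rc_nonneg hΛ _
  have hpos : (0:ℝ) < rc Λ (K : Set Z) + ε := by linarith
  set δ : ℝ := min (1/2) ((ε/2) / (rc Λ (K : Set Z) + ε)) with hδdef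
  have hδpos : 0 < δ := lt_min (by norm_num) (div_pos (half_pos hεr) hpos)
  have hδhalf : δ ≤ 1/2 := min_le_left _ _
  have hδle : δ * (rc Λ (K : Set Z) + ε) ≤ ε/2 := by
    have := min_le_right (1/2) ((ε/2) / (rc Λ (K : Set Z) + ε))
    calc δ * (rc Λ (K : Set Z) + ε) ≤ ((ε/2) / (rc Λ (K : Set Z) + ε)) * (rc Λ (K : Set Z) + ε) :=
          mul_le_mul_of_nonneg_right this hpos.le
      _ = ε/2 := div_mul_cancel₀ _ (ne_of_gt hpos)
  have h1δ : (0:ℝ) < 1 - δ := by linarith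
  set K' : Compacts Z := ⟨{z | 1 - δ ≤ f z},
    (IsClosed.preimage f.continuous isClosed_Ici).isCompact⟩ with hK'def
  have hKint : (K : Set Z) ⊆ interior (K' : Set Z) := by
    have hsub : {z : Z | 1 - δ < f z} ⊆ interior (K' : Set Z) :=
      interior_maximal (fun z (hz : 1 - δ < f z) => (le_of_lt hz : z ∈ {z : Z | 1 - δ ≤ f z})) (isOpen_lt continuous_const f.continuous)
    intro z hz
    refine hsub ?_
    have := hf.2 z hz
    simp only [mem_setOf_eq]
    linarith
  have hg : (1 - δ)⁻¹ • f ∈ testFns (K' : Set Z) := by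
    constructor
    · intro z
      simp only [ContinuousMap.smul_apply, smul_eq_mul]
      exact mul_nonneg (inv_nonneg.2 h1δ.le) (hf.1 z)
    · intro z hz
      simp only [ContinuousMap.smul_apply, smul_eq_mul]
      have h := mul_le_mul_of_nonneg_left hz (inv_nonneg.2 h1δ.le)
      rwa [inv_mul_cancel₀ (ne_of_gt h1δ)] at h
  have hrcK' : rc Λ (K' : Set Z) ≤ rc Λ (K : Set Z) + ε := by
    have h1 : rc Λ (K' : Set Z) ≤ (1 - δ)⁻¹ * Λ f := by
      have := rc_le hΛ hg
      rwa [_root_.map_smul, smul_eq_mul] at this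
    have h2 : (1 - δ)⁻¹ * Λ f ≤ (1 - δ)⁻¹ * (rc Λ (K : Set Z) + ε/2) :=
      mul_le_mul_of_nonneg_left (by linarith) (inv_nonneg.2 h1δ.le)
    have h3 : (1 - δ)⁻¹ * (rc Λ (K : Set Z) + ε/2) ≤ rc Λ (K : Set Z) + ε := by
      rw [inv_mul_le_iff₀ h1δ]
      nlinarith
    linarith
  refine le_trans (iInf₂_le K' hKint) ?_
  rw [rieszC_apply hΛ, rieszC_apply hΛ]
  calc ENNReal.ofReal (rc Λ (K' : Set Z)) ≤ ENNReal.ofReal (rc Λ (K : Set Z) + ε) :=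
        ENNReal.ofReal_le_ofReal hrcK'
    _ = ENNReal.ofReal (rc Λ (K : Set Z)) + ENNReal.ofReal (ε:ℝ) :=
        ENNReal.ofReal_add hrc0 hεr.le
    _ = ENNReal.ofReal (rc Λ (K : Set Z)) + (ε : ℝ≥0∞) := by
        rw [ENNReal.ofReal_coe_nnreal]

variable [MeasurableSpace Z] [BorelSpace Z]

/-- The Riesz measure associated to a positive linear functional. -/
def rmkMeasure : Measure Z := (rieszC hΛ).measure

lemma rmkMeasure_compacts (K : Compacts Z) :
    rmkMeasure hΛ (K : Set Z) = ENNReal.ofReal (rc Λ (K : Set Z)) := by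
  rw [rmkMeasure, Content.measure_eq_content_of_regular _ (rieszC_regular hΛ), rieszC_apply hΛ]

lemma rmkMeasure_univ_le : rmkMeasure hΛ (univ : Set Z) ≤ ENNReal.ofReal (Λ 1) := by
  rw [show (univ : Set Z) = ((⟨univ, isCompact_univ⟩ : Compacts Z) : Set Z) from rfl,
    rmkMeasure_compacts hΛ]
  exact ENNReal.ofReal_le_ofReal (rc_le hΛ (one_mem_testFns univ))

instance : IsFiniteMeasure (rmkMeasure hΛ) :=
  ⟨lt_of_le_of_lt (rmkMeasure_univ_le hΛ) ENNReal.ofReal_lt_top⟩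

lemma lam_le_measure_open {U : Set Z} (hU : IsOpen U) {g : C(Z, ℝ)}
    (hg0 : ∀ z, 0 ≤ g z) (hg1 : ∀ z, g z ≤ 1) (hgs : tsupport g ⊆ U) :
    ENNReal.ofReal (Λ g) ≤ rmkMeasure hΛ U := by
  set K : Compacts Z := ⟨tsupport g, (isClosed_tsupport _).isCompact⟩
  have h1 : Λ g ≤ rc Λ (K : Set Z) := by
    refine le_csInf (image_nonempty Λ _) ?_
    rintro r ⟨f, hf, rfl⟩
    refine lam_mono hΛ fun z => ?_
    by_cases hz : z ∈ tsupport g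
    · exact le_trans (hg1 z) (hf.2 z hz)
    · have : g z = 0 := image_eq_zero_of_notMem_tsupport hz
      rw [this]; exact hf.1 z
  calc ENNReal.ofReal (Λ g) ≤ ENNReal.ofReal (rc Λ (K : Set Z)) := ENNReal.ofReal_le_ofReal h1
    _ = (rieszC hΛ) K := (rieszC_apply hΛ K).symm
    _ ≤ (rieszC hΛ).innerContent ⟨U, hU⟩ := (rieszC hΛ).le_innerContent K ⟨U, hU⟩ hgs
    _ = rmkMeasure hΛ U := by
      rw [rmkMeasure, Content.measure_apply _ hU.measurableSet,
        ← Content.outerMeasure_opens (rieszC hΛ) ⟨U, hU⟩]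
      rfl


omit hΛ in
lemma integrable_cm (π : Measure Z) [IsFiniteMeasure π] (g : C(Z, ℝ)) : Integrable g π :=
  g.continuous.integrable_of_hasCompactSupport (HasCompactSupport.of_compactSpace g)

lemma lam_le_integral_aux (f : C(Z, ℝ)) {ε : ℝ} (hε : 0 < ε) (hε1 : ε ≤ 1) :
    Λ f ≤ ∫ z, f z ∂(rmkMeasure hΛ) +
      ε * (2 * ((rmkMeasure hΛ) univ).toReal + 2 * (‖f‖ + 2)) := by
  set π := rmkMeasure hΛ with hπdef
  set B : ℝ := ‖f‖ + 2 with hBdef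
  set b : ℝ := ‖f‖ with hbdef
  set a : ℝ := -‖f‖ - 1 with hadef
  have hab : (0:ℝ) < b - a := by simp only [hbdef, hadef]; linarith [norm_nonneg f]
  set n : ℕ := ⌈(b - a)/ε⌉₊ with hndef
  have hn : 0 < n := Nat.ceil_pos.2 (div_pos hab hε)
  have hnR : (0:ℝ) < n := by exact_mod_cast hn
  set δ : ℝ := (b - a)/n with hδdef
  have hδpos : 0 < δ := div_pos hab hnR
  have hδε : δ ≤ ε := by
    rw [hδdef, div_le_iff₀ hnR]
    have h1 : (b - a)/ε ≤ n := Nat.le_ceil _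
    rw [div_le_iff₀ hε] at h1
    linarith
  have hnδ : (n:ℝ) * δ = b - a := by
    rw [hδdef]; field_simp
  -- the partition of the range
  set E : ℕ → Set Z := fun i => f ⁻¹' (Ioc (a + i * δ) (a + (i+1) * δ)) with hEdef
  have hEmeas : ∀ i, MeasurableSet (E i) :=
    fun i => f.continuous.measurable measurableSet_Ioc
  have hEdisj : ∀ i j : ℕ, i ≠ j → Disjoint (E i) (E j) := by
    intro i j hij
    rw [Set.disjoint_left]
    rintro z ⟨h1i, h2i⟩ ⟨h1j, h2j⟩
    rcases hij.lt_or_gt with h | h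
    · have : (i:ℝ) + 1 ≤ j := by exact_mod_cast h
      nlinarith
    · have : (j:ℝ) + 1 ≤ i := by exact_mod_cast h
      nlinarith
  have hfz : ∀ z, a < f z ∧ f z ≤ b := by
    intro z
    have h := f.norm_coe_le_norm z
    rw [Real.norm_eq_abs, abs_le] at h
    constructor
    · simp only [hadef]; linarith [h.1]
    · exact h.2
  have hcover : (⋃ i ∈ Finset.range n, E i) = univ := by
    refine eq_univ_of_forall fun z => ?_
    obtain ⟨hza, hzb⟩ := hfz z
    set j : ℕ := ⌈(f z - a)/δ⌉₊ with hjdef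
    have hj1 : 1 ≤ j := Nat.one_le_iff_ne_zero.2 (Nat.ceil_pos.2 (div_pos (by linarith) hδpos)).ne'
    have hjn : j ≤ n := by
      rw [hjdef]
      refine Nat.ceil_le.2 ?_
      rw [div_le_iff₀ hδpos]
      calc f z - a ≤ b - a := by linarith
        _ = n * δ := hnδ.symm
    have hjlow : ((j:ℝ) - 1) < (f z - a)/δ := by
      have : (j - 1 : ℕ) < j := Nat.sub_lt hj1 one_pos
      have h2 := Nat.lt_ceil.1 (hjdef ▸ this)
      have hc : ((j - 1 : ℕ) : ℝ) = (j:ℝ) - 1 := by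
        push_cast [hj1]; ring
      linarith [hc ▸ h2]
    have hjhigh : (f z - a)/δ ≤ j := Nat.le_ceil _
    refine Set.mem_biUnion (Finset.mem_range.2 (show j - 1 < n by omega)) ?_
    have hc : ((j - 1 : ℕ) : ℝ) = (j:ℝ) - 1 := by push_cast [hj1]; ring
    simp only [hEdef, Set.mem_preimage, Set.mem_Ioc, hc]
    have h8 := (lt_div_iff₀ hδpos).1 hjlow
    have h9 := (div_le_iff₀ hδpos).1 hjhigh
    have h10 : ((j:ℝ) - 1 + 1) * δ = (j:ℝ) * δ := by ring
    have h11 : (f z - a) / δ * δ = f z - a := div_mul_cancel₀ _ (ne_of_gt hδpos)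
    constructor
    · linarith
    · linarith
  -- choose open sets
  have hUex : ∀ i : ℕ, ∃ U, E i ⊆ U ∧ IsOpen U ∧ π U < π (E i) + ENNReal.ofReal (ε/n) := by
    intro i
    obtain ⟨U, hEU, hUo, hlt⟩ := Set.exists_isOpen_lt_add (E i) (measure_ne_top π _)
      (ENNReal.ofReal_pos.2 (div_pos hε hnR)).ne'
    exact ⟨U, hEU, hUo, hlt⟩
  choose U hEU hUo hUlt using hUex
  set V : ℕ → Set Z := fun i => U i ∩ {z | f z < a + (i+1) * δ + ε} with hVdef
  have hVo : ∀ i, IsOpen (V i) := fun i =>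
    (hUo i).inter (isOpen_lt f.continuous continuous_const)
  have hEV : ∀ i, E i ⊆ V i := by
    intro i z hz
    exact ⟨hEU i hz, by simp only [mem_setOf_eq]; have h := hz.2; linarith⟩
  have hπV : ∀ i, π (V i) ≤ π (E i) + ENNReal.ofReal (ε/n) :=
    fun i => le_trans (measure_mono inter_subset_left) (hUlt i).le
  have hfV : ∀ i, ∀ z ∈ V i, f z < a + (i+1) * δ + ε := fun i z hz => hz.2
  -- partition of unity
  have hcover' : (univ : Set Z) ⊆ ⋃ i : Fin n, V i.val := by
    intro z _
    have : z ∈ ⋃ i ∈ Finset.range n, E i := hcover ▸ mem_univ z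
    obtain ⟨i, hi, hzi⟩ := Set.mem_iUnion₂.1 this
    exact Set.mem_iUnion.2 ⟨⟨i, Finset.mem_range.1 hi⟩, hEV i hzi⟩
  obtain ⟨p, hp⟩ := PartitionOfUnity.exists_isSubordinate isClosed_univ
    (fun i : Fin n => V i.val) (fun i => hVo i.val) hcover'
  have hpsum : ∀ z, ∑ i : Fin n, p i z = 1 := by
    intro z
    rw [← finsum_eq_sum_of_fintype]
    exact p.sum_eq_one (mem_univ z)
  have hpnn : ∀ (i : Fin n) z, 0 ≤ p i z := fun i z => p.nonneg i z
  have hple : ∀ (i : Fin n) z, p i z ≤ 1 := by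
    intro i z
    calc p i z ≤ ∑ j : Fin n, p j z :=
          Finset.single_le_sum (fun j _ => hpnn j z) (Finset.mem_univ i)
      _ = 1 := hpsum z
  have hponesum : (∑ i : Fin n, (p i : C(Z, ℝ))) = 1 := by
    ext z
    rw [ContinuousMap.sum_apply]
    exact hpsum z
  have hfd : f = ∑ i : Fin n, (p i : C(Z, ℝ)) * f := by
    ext z
    rw [ContinuousMap.sum_apply]
    simp only [ContinuousMap.mul_apply]
    rw [← Finset.sum_mul, hpsum z, one_mul]
  -- abbreviations
  set mE : ℕ → ℝ := fun i => (π (E i)).toReal with hmEdef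
  set mU : ℝ := (π univ).toReal with hmUdef
  have hmE0 : ∀ i, 0 ≤ mE i := fun i => ENNReal.toReal_nonneg
  have hmU0 : 0 ≤ mU := ENNReal.toReal_nonneg
  set c : ℕ → ℝ := fun i => a + (i+1) * δ + ε with hcdef
  set t : ℕ → ℝ := fun i => c i + B with htdef
  have hLi0 : ∀ i : Fin n, 0 ≤ Λ (p i) := fun i => hΛ _ (hpnn i)
  -- step 1
  have S1 : Λ f ≤ ∑ i : Fin n, c i.val * Λ (p i) := by
    calc Λ f = ∑ i : Fin n, Λ ((p i : C(Z, ℝ)) * f) := by rw [← map_sum, ← hfd]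
      _ ≤ ∑ i : Fin n, c i.val * Λ (p i) := by
          refine Finset.sum_le_sum fun i _ => ?_
          have hmono : Λ ((p i : C(Z, ℝ)) * f) ≤ Λ (c i.val • (p i : C(Z, ℝ))) := by
            refine lam_mono hΛ fun z => ?_
            simp only [ContinuousMap.mul_apply, ContinuousMap.smul_apply, smul_eq_mul]
            by_cases hz : p i z = 0
            · rw [hz]; simp
            · have hzV : z ∈ V i.val := hp i (subset_closure (by
                simp only [Function.mem_support]; exact hz))
              have := hfV i.val z hzV
              calc p i z * f z ≤ p i z * c i.val :=
                    mul_le_mul_of_nonneg_left (le_of_lt this) (hpnn i z)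
                _ = c i.val * p i z := mul_comm _ _
          rwa [_root_.map_smul, smul_eq_mul] at hmono
  -- step 2 : Λ (p i) ≤ mE i + ε/n
  have S2 : ∀ i : Fin n, Λ (p i) ≤ mE i.val + ε/n := by
    intro i
    have h1 : ENNReal.ofReal (Λ (p i)) ≤ π (V i.val) :=
      lam_le_measure_open hΛ (hVo i.val) (hpnn i) (hple i) (hp i)
    have h2 : π (V i.val) ≤ π (E i.val) + ENNReal.ofReal (ε/n) := hπV i.val
    have h3 := ENNReal.toReal_mono (by
        exact ENNReal.add_ne_top.2 ⟨measure_ne_top π _, ENNReal.ofReal_ne_top⟩)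
      (h1.trans h2)
    rw [ENNReal.toReal_ofReal (hLi0 i), ENNReal.toReal_add (measure_ne_top π _)
      ENNReal.ofReal_ne_top, ENNReal.toReal_ofReal (by positivity)] at h3
    exact h3
  -- bounds on t
  have ht0 : ∀ i : Fin n, 0 ≤ t i.val := by
    intro i
    simp only [htdef, hcdef, hBdef, hadef]
    have : (0:ℝ) ≤ (i.val + 1 : ℝ) * δ := by positivity
    linarith
  have htB : ∀ i : Fin n, t i.val ≤ 2 * B := by
    intro i
    simp only [htdef, hcdef]
    have hi1 : ((i.val:ℝ) + 1) ≤ n := by exact_mod_cast i.isLt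
    have : ((i.val:ℝ) + 1) * δ ≤ n * δ := mul_le_mul_of_nonneg_right hi1 hδpos.le
    rw [hnδ] at this
    simp only [hBdef, hadef, hbdef] at *
    linarith
  -- sum of Λ (p i) equals Λ 1 and relation to mU
  have hsumL : ∑ i : Fin n, Λ (p i) = Λ 1 := by rw [← map_sum, hponesum]
  have hmUle : mU ≤ Λ 1 := by
    have h1 : π univ = ENNReal.ofReal (rc Λ (univ : Set Z)) :=
      rmkMeasure_compacts hΛ ⟨univ, isCompact_univ⟩
    rw [hmUdef, hπdef] at *
    rw [h1, ENNReal.toReal_ofReal (rc_nonneg hΛ _)]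
    exact rc_le hΛ (one_mem_testFns univ)
  -- measure additivity
  have hmsum : ∑ i : Fin n, mE i.val = mU := by
    have h1 : π (⋃ i ∈ Finset.range n, E i) = ∑ i ∈ Finset.range n, π (E i) :=
      measure_biUnion_finset (fun i _ j _ hij => hEdisj i j hij) (fun i _ => hEmeas i)
    rw [hcover] at h1
    rw [Fin.sum_univ_eq_sum_range (fun i => mE i) n]
    simp only [hmEdef, hmUdef]
    rw [h1, ENNReal.toReal_sum (fun i _ => measure_ne_top π _)]
  -- integral decomposition
  have hidec : ∑ i : Fin n, (a + i.val * δ) * mE i.val ≤ ∫ z, f z ∂π := by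
    have h1 : ∫ z, f z ∂π = ∑ i ∈ Finset.range n, ∫ z in E i, f z ∂π := by
      rw [← setIntegral_univ, ← hcover,
        integral_biUnion_finset (Finset.range n) (fun i _ => hEmeas i)
          (fun i _ j _ hij => hEdisj i j hij)
          (fun i _ => (integrable_cm π f).integrableOn)]
    have h2 : ∀ i : ℕ, (a + i * δ) * mE i ≤ ∫ z in E i, f z ∂π := by
      intro i
      exact setIntegral_ge_of_const_le_real (hEmeas i) (measure_ne_top π _)
        (fun z hz => le_of_lt hz.1) (integrable_cm π f).integrableOn
    rw [h1, Fin.sum_univ_eq_sum_range (fun i => (a + i * δ) * mE i) n]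
    exact Finset.sum_le_sum fun i _ => h2 i
  -- final computation
  have S3 : ∑ i : Fin n, c i.val * Λ (p i) =
      ∑ i : Fin n, t i.val * Λ (p i) - B * Λ 1 := by
    rw [← hsumL, Finset.mul_sum, ← Finset.sum_sub_distrib]
    refine Finset.sum_congr rfl fun i _ => ?_
    simp only [htdef]; ring
  have S4 : ∑ i : Fin n, t i.val * Λ (p i) ≤
      ∑ i : Fin n, t i.val * mE i.val + 2 * B * ε := by
    have h1 : ∀ i : Fin n, t i.val * Λ (p i) ≤ t i.val * mE i.val + 2 * B * (ε/n) := by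
      intro i
      have := mul_le_mul_of_nonneg_left (S2 i) (ht0 i)
      have h2 : t i.val * (ε/n) ≤ 2 * B * (ε/n) :=
        mul_le_mul_of_nonneg_right (htB i) (by positivity)
      calc t i.val * Λ (p i) ≤ t i.val * (mE i.val + ε/n) := this
        _ = t i.val * mE i.val + t i.val * (ε/n) := by ring
        _ ≤ t i.val * mE i.val + 2 * B * (ε/n) := by linarith
    calc ∑ i : Fin n, t i.val * Λ (p i)
        ≤ ∑ i : Fin n, (t i.val * mE i.val + 2 * B * (ε/n)) := Finset.sum_le_sum fun i _ => h1 i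
      _ = ∑ i : Fin n, t i.val * mE i.val + n * (2 * B * (ε/n)) := by
          rw [Finset.sum_add_distrib, Finset.sum_const, Finset.card_univ, Fintype.card_fin,
            nsmul_eq_mul]
      _ = ∑ i : Fin n, t i.val * mE i.val + 2 * B * ε := by
          field_simp
  have S5 : ∑ i : Fin n, t i.val * mE i.val =
      ∑ i : Fin n, (a + i.val * δ) * mE i.val + (δ + ε + B) * mU := by
    rw [← hmsum, Finset.mul_sum, ← Finset.sum_add_distrib]
    refine Finset.sum_congr rfl fun i _ => ?_
    simp only [htdef, hcdef]; ring
  have hB0 : (0:ℝ) ≤ B := by simp only [hBdef]; linarith [norm_nonneg f]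
  have haux : (δ + ε + B) * mU ≤ (ε + ε + B) * mU :=
    mul_le_mul_of_nonneg_right (by linarith) hmU0
  have hBU : B * mU ≤ B * Λ 1 := mul_le_mul_of_nonneg_left hmUle hB0
  calc Λ f ≤ ∑ i : Fin n, c i.val * Λ (p i) := S1
    _ = ∑ i : Fin n, t i.val * Λ (p i) - B * Λ 1 := S3
    _ ≤ ∑ i : Fin n, t i.val * mE i.val + 2 * B * ε - B * Λ 1 := by linarith [S4]
    _ = ∑ i : Fin n, (a + i.val * δ) * mE i.val + (δ + ε + B) * mU + 2 * B * ε - B * Λ 1 := by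
        rw [S5]
    _ ≤ ∫ z, f z ∂π + (ε + ε + B) * mU + 2 * B * ε - B * mU := by linarith [hidec, haux, hBU]
    _ ≤ ∫ z, f z ∂π + ε * (2 * mU + 2 * B) := by ring_nf; linarith

lemma lam_le_integral (f : C(Z, ℝ)) : Λ f ≤ ∫ z, f z ∂(rmkMeasure hΛ) := by
  refine le_of_forall_pos_le_add fun η hη => ?_
  set M : ℝ := 2 * ((rmkMeasure hΛ) univ).toReal + 2 * (‖f‖ + 2) + 1 with hM
  have hM1 : 1 ≤ M := by
    have := ENNReal.toReal_nonneg (a := (rmkMeasure hΛ) univ)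
    have := norm_nonneg f
    simp only [hM]; linarith
  have hM0 : 0 < M := by linarith
  set ε : ℝ := min (η / M) 1 with hεdef
  have hεpos : 0 < ε := lt_min (div_pos hη hM0) one_pos
  have hε1 : ε ≤ 1 := min_le_right _ _
  have h := lam_le_integral_aux hΛ f hεpos hε1
  have h2 : ε * (2 * ((rmkMeasure hΛ) univ).toReal + 2 * (‖f‖ + 2)) ≤ η := by
    have h3 : ε * (2 * ((rmkMeasure hΛ) univ).toReal + 2 * (‖f‖ + 2)) ≤ ε * M :=
      mul_le_mul_of_nonneg_left (by simp only [hM]; linarith) hεpos.le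
    have h4 : ε * M ≤ (η / M) * M :=
      mul_le_mul_of_nonneg_right (min_le_left _ _) (by linarith)
    rw [div_mul_cancel₀ _ (ne_of_gt hM0)] at h4
    linarith
  linarith

theorem lam_eq_integral (f : C(Z, ℝ)) : Λ f = ∫ z, f z ∂(rmkMeasure hΛ) := by
  refine le_antisymm (lam_le_integral hΛ f) ?_
  have h := lam_le_integral hΛ (-f)
  rw [map_neg] at h
  have h2 : ∫ z, (-f) z ∂(rmkMeasure hΛ) = -∫ z, f z ∂(rmkMeasure hΛ) := by
    simp only [ContinuousMap.neg_apply]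
    exact integral_neg _
  linarith


end RMK

section Duality

variable {X Y : Type*} [MetricSpace X] [CompactSpace X] [MeasurableSpace X] [BorelSpace X]
  [MetricSpace Y] [CompactSpace Y] [MeasurableSpace Y] [BorelSpace Y]
  (μ : Measure X) [IsProbabilityMeasure μ] (ν : Measure Y) [IsProbabilityMeasure ν]

/-- `h ∘ fst` as a continuous map. -/
def cfst (h : C(X, ℝ)) : C(X × Y, ℝ) := h.comp ⟨Prod.fst, continuous_fst⟩

/-- `k ∘ snd` as a continuous map. -/
def csnd (k : C(Y, ℝ)) : C(X × Y, ℝ) := k.comp ⟨Prod.snd, continuous_snd⟩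

@[simp] lemma cfst_apply (h : C(X, ℝ)) (p : X × Y) : cfst h p = h p.1 := rfl
@[simp] lemma csnd_apply (k : C(Y, ℝ)) (p : X × Y) : csnd k p = k p.2 := rfl

lemma integral_comp_fst (γ : Measure (X × Y)) (hγ : γ.map Prod.fst = μ) (h : C(X, ℝ)) :
    ∫ p, h p.1 ∂γ = ∫ x, h x ∂μ := by
  rw [← hγ, integral_map measurable_fst.aemeasurable
    h.continuous.measurable.aestronglyMeasurable]

lemma integral_comp_snd (γ : Measure (X × Y)) (hγ : γ.map Prod.snd = ν) (k : C(Y, ℝ)) :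
    ∫ p, k p.2 ∂γ = ∫ y, k y ∂ν := by
  rw [← hγ, integral_map measurable_snd.aemeasurable
    k.continuous.measurable.aestronglyMeasurable]

lemma plan_prob (γ : Measure (X × Y)) (hγ : γ.map Prod.fst = μ) : IsProbabilityMeasure γ := by
  constructor
  have h := Measure.map_apply (μ := γ) measurable_fst MeasurableSet.univ
  rw [hγ] at h
  rw [← Set.preimage_univ (f := @Prod.fst X Y), ← h, measure_univ]

lemma plan_integral_add (γ : Measure (X × Y)) (hγ1 : γ.map Prod.fst = μ)
    (hγ2 : γ.map Prod.snd = ν) (h : C(X, ℝ)) (k : C(Y, ℝ)) :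
    ∫ p, (h p.1 + k p.2) ∂γ = ∫ x, h x ∂μ + ∫ y, k y ∂ν := by
  haveI := plan_prob μ γ hγ1
  rw [integral_add]
  · rw [integral_comp_fst μ γ hγ1 h, integral_comp_snd ν γ hγ2 k]
  · exact integrable_cm γ (cfst h)
  · exact integrable_cm γ (csnd k)

/-- The admissible decompositions lying above `f`. -/
def QS (f : C(X × Y, ℝ)) : Set ℝ := {r | ∃ (h : C(X, ℝ)) (k : C(Y, ℝ)),
  (∀ p : X × Y, f p ≤ h p.1 + k p.2) ∧ r = ∫ x, h x ∂μ + ∫ y, k y ∂ν}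

/-- The sublinear functional. -/
def Q (f : C(X × Y, ℝ)) : ℝ := sInf (QS μ ν f)

lemma norm_mem_QS (f : C(X × Y, ℝ)) : (‖f‖ : ℝ) ∈ QS μ ν f := by
  refine ⟨ContinuousMap.const X ‖f‖, 0, fun p => ?_, ?_⟩
  · simp only [ContinuousMap.const_apply, ContinuousMap.zero_apply, add_zero]
    exact le_trans (le_abs_self _) (by rw [← Real.norm_eq_abs]; exact f.norm_coe_le_norm p)
  · simp [integral_const, measure_univ]

lemma QS_nonempty (f : C(X × Y, ℝ)) : (QS μ ν f).Nonempty := ⟨‖f‖, norm_mem_QS μ ν f⟩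

lemma QS_lower (f : C(X × Y, ℝ)) : ∀ r ∈ QS μ ν f, ∫ p, f p ∂(μ.prod ν) ≤ r := by
  rintro r ⟨h, k, hadm, rfl⟩
  have h1 : (μ.prod ν).map Prod.fst = μ := by
    rw [Measure.map_fst_prod]; simp [measure_univ]
  have h2 : (μ.prod ν).map Prod.snd = ν := by
    rw [Measure.map_snd_prod]; simp [measure_univ]
  rw [← plan_integral_add μ ν (μ.prod ν) h1 h2 h k]
  refine integral_mono (integrable_cm (μ.prod ν) f) ?_ (fun p => hadm p)
  exact integrable_cm (μ.prod ν) (cfst h + csnd k)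

lemma QS_bddBelow (f : C(X × Y, ℝ)) : BddBelow (QS μ ν f) :=
  ⟨∫ p, f p ∂(μ.prod ν), fun r hr => QS_lower μ ν f r hr⟩

lemma Q_le {f : C(X × Y, ℝ)} {r : ℝ} (hr : r ∈ QS μ ν f) : Q μ ν f ≤ r :=
  csInf_le (QS_bddBelow μ ν f) hr

lemma Q_ge_integral (f : C(X × Y, ℝ)) : ∫ p, f p ∂(μ.prod ν) ≤ Q μ ν f :=
  le_csInf (QS_nonempty μ ν f) (QS_lower μ ν f)

lemma Q_const (r : ℝ) : Q μ ν (ContinuousMap.const (X × Y) r) = r := by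
  refine le_antisymm (Q_le μ ν ⟨ContinuousMap.const X r, 0, fun p => by simp, by
    simp [integral_const, measure_univ]⟩) ?_
  have := Q_ge_integral μ ν (ContinuousMap.const (X × Y) r)
  simpa [integral_const, measure_univ] using this

lemma Q_exists_lt (f : C(X × Y, ℝ)) {ε : ℝ} (hε : 0 < ε) :
    ∃ r ∈ QS μ ν f, r < Q μ ν f + ε :=
  exists_lt_of_csInf_lt (QS_nonempty μ ν f) (lt_add_of_pos_right _ hε)

lemma Q_add (f g : C(X × Y, ℝ)) : Q μ ν (f + g) ≤ Q μ ν f + Q μ ν g := by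
  refine le_of_forall_pos_le_add fun ε hε => ?_
  obtain ⟨r₁, ⟨h₁, k₁, ha₁, hr₁⟩, hlt₁⟩ := Q_exists_lt μ ν f (half_pos hε)
  obtain ⟨r₂, ⟨h₂, k₂, ha₂, hr₂⟩, hlt₂⟩ := Q_exists_lt μ ν g (half_pos hε)
  have hmem : r₁ + r₂ ∈ QS μ ν (f + g) := by
    refine ⟨h₁ + h₂, k₁ + k₂, fun p => ?_, ?_⟩
    · simp only [ContinuousMap.add_apply]
      have := ha₁ p; have := ha₂ p; linarith
    · simp only [ContinuousMap.add_apply]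
      rw [hr₁, hr₂, integral_add (integrable_cm μ h₁) (integrable_cm μ h₂),
        integral_add (integrable_cm ν k₁) (integrable_cm ν k₂)]
      ring
  calc Q μ ν (f + g) ≤ r₁ + r₂ := Q_le μ ν hmem
    _ ≤ Q μ ν f + Q μ ν g + ε := by linarith

lemma Q_smul_le (f : C(X × Y, ℝ)) {t : ℝ} (ht : 0 < t) : Q μ ν (t • f) ≤ t * Q μ ν f := by
  have key : ∀ r ∈ QS μ ν f, Q μ ν (t • f) ≤ t * r := by
    rintro r ⟨h, k, hadm, rfl⟩
    refine Q_le μ ν ⟨t • h, t • k, fun p => ?_, ?_⟩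
    · simp only [ContinuousMap.smul_apply, smul_eq_mul]
      have := hadm p
      nlinarith
    · simp only [ContinuousMap.smul_apply, smul_eq_mul]
      rw [integral_const_mul, integral_const_mul]
      ring
  have h2 : ∀ r ∈ QS μ ν f, t⁻¹ * Q μ ν (t • f) ≤ r := by
    intro r hr
    rw [inv_mul_le_iff₀ ht]
    exact key r hr
  have h3 : t⁻¹ * Q μ ν (t • f) ≤ Q μ ν f := le_csInf (QS_nonempty μ ν f) (h2)
  calc Q μ ν (t • f) = t * (t⁻¹ * Q μ ν (t • f)) := by field_simp
    _ ≤ t * Q μ ν f := mul_le_mul_of_nonneg_left h3 ht.le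

lemma Q_smul (f : C(X × Y, ℝ)) {t : ℝ} (ht : 0 < t) : Q μ ν (t • f) = t * Q μ ν f := by
  refine le_antisymm (Q_smul_le μ ν f ht) ?_
  have h := Q_smul_le μ ν (t • f) (inv_pos.2 ht)
  rw [smul_smul, inv_mul_cancel₀ (ne_of_gt ht), one_smul] at h
  have := mul_le_mul_of_nonneg_left h ht.le
  rw [← mul_assoc, mul_inv_cancel₀ (ne_of_gt ht), one_mul] at this
  linarith

lemma Q_zero : Q μ ν (0 : C(X × Y, ℝ)) = 0 := by
  have h : (0 : C(X × Y, ℝ)) = ContinuousMap.const (X × Y) 0 := by ext p; simp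
  rw [h, Q_const]

lemma Q_neg_add_nonneg (f : C(X × Y, ℝ)) : 0 ≤ Q μ ν f + Q μ ν (-f) := by
  have h := Q_add μ ν f (-f)
  rw [add_neg_cancel, Q_zero] at h
  linarith


lemma neg_Q_neg (c : C(X × Y, ℝ)) :
    -Q μ ν (-c) = sSup {r : ℝ | ∃ (h : C(X, ℝ)) (k : C(Y, ℝ)),
      (∀ x y, h x + k y ≤ c (x, y)) ∧ r = ∫ x, h x ∂μ + ∫ y, k y ∂ν} := by
  set D := {r : ℝ | ∃ (h : C(X, ℝ)) (k : C(Y, ℝ)),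
      (∀ x y, h x + k y ≤ c (x, y)) ∧ r = ∫ x, h x ∂μ + ∫ y, k y ∂ν} with hD
  have hset : QS μ ν (-c) = -D := by
    ext r
    simp only [QS, Set.mem_neg, hD, Set.mem_setOf_eq]
    constructor
    · rintro ⟨h, k, hadm, rfl⟩
      refine ⟨-h, -k, fun x y => ?_, ?_⟩
      · have := hadm (x, y)
        simp only [ContinuousMap.neg_apply] at this ⊢
        linarith
      · simp only [ContinuousMap.neg_apply, integral_neg]
        ring
    · rintro ⟨h, k, hadm, hr⟩
      refine ⟨-h, -k, fun p => ?_, ?_⟩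
      · have := hadm p.1 p.2
        simp only [ContinuousMap.neg_apply]
        linarith
      · simp only [ContinuousMap.neg_apply, integral_neg]
        linarith
  rw [Q, hset, Real.sInf_def, neg_neg, neg_neg]

lemma exists_functional (c : C(X × Y, ℝ)) (hc0 : ∀ p, 0 ≤ c p) :
    ∃ L : C(X × Y, ℝ) →ₗ[ℝ] ℝ, (∀ f, L f ≤ Q μ ν f) ∧ L c = -Q μ ν (-c) := by
  have hXne : Nonempty X := by
    by_contra hX
    rw [not_nonempty_iff] at hX
    have h1 : μ Set.univ = 1 := measure_univ
    rw [Set.univ_eq_empty_iff.2 hX, measure_empty] at h1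
    exact zero_ne_one h1
  have hYne : Nonempty Y := by
    by_contra hY
    rw [not_nonempty_iff] at hY
    have h1 : ν Set.univ = 1 := measure_univ
    rw [Set.univ_eq_empty_iff.2 hY, measure_empty] at h1
    exact zero_ne_one h1
  obtain ⟨x⟩ := hXne
  obtain ⟨y⟩ := hYne
  set p₀ : X × Y := (x, y)
  set x₀ : C(X × Y, ℝ) := -(c + 1) with hx₀
  have hx₀p : x₀ p₀ ≤ -1 := by
    simp only [hx₀, ContinuousMap.neg_apply, ContinuousMap.add_apply, ContinuousMap.one_apply]
    linarith [hc0 p₀]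
  have H : ∀ t : ℝ, t • x₀ = 0 → t • Q μ ν x₀ = 0 := by
    intro t ht
    have h1 : t * x₀ p₀ = 0 := by
      have := congrArg (fun g : C(X × Y, ℝ) => g p₀) ht
      simpa using this
    have ht0 : t = 0 := by
      rcases mul_eq_zero.1 h1 with h | h
      · exact h
      · exfalso; linarith
    simp [ht0]
  set f : C(X × Y, ℝ) →ₗ.[ℝ] ℝ := LinearPMap.mkSpanSingleton' x₀ (Q μ ν x₀) H with hf
  have hfle : ∀ v : f.domain, f v ≤ Q μ ν v := by
    rintro ⟨v, hv⟩
    have hv' : v ∈ (ℝ ∙ x₀) := hv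
    obtain ⟨t, rfl⟩ := Submodule.mem_span_singleton.1 hv'
    rw [LinearPMap.mkSpanSingleton'_apply, smul_eq_mul]
    show t * Q μ ν x₀ ≤ Q μ ν (t • x₀)
    rcases lt_trichotomy t 0 with ht | ht | ht
    · calc t * Q μ ν x₀ ≤ (-t) * Q μ ν (-x₀) := by
            have := Q_neg_add_nonneg μ ν x₀
            nlinarith
        _ = Q μ ν ((-t) • (-x₀)) := (Q_smul μ ν (-x₀) (by linarith)).symm
        _ = Q μ ν (t • x₀) := by rw [neg_smul_neg]
    · subst ht
      rw [zero_smul, Q_zero]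
      simp
    · rw [Q_smul μ ν x₀ ht]
  obtain ⟨L, hLf, hLle⟩ := exists_extension_of_le_sublinear f (Q μ ν)
    (fun t ht g => Q_smul μ ν g ht) (Q_add μ ν) hfle
  refine ⟨L, hLle, ?_⟩
  have hx₀mem : x₀ ∈ f.domain := Submodule.mem_span_singleton_self x₀
  have hLx₀ : L x₀ = Q μ ν x₀ := by
    have h1 := hLf ⟨x₀, hx₀mem⟩
    rw [LinearPMap.mkSpanSingleton'_apply_self] at h1
    exact h1
  have hQ1 : Q μ ν (1 : C(X × Y, ℝ)) = 1 := by
    have h : (1 : C(X × Y, ℝ)) = ContinuousMap.const (X × Y) 1 := by ext q; simp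
    rw [h, Q_const]
  have hQm1 : Q μ ν (-1 : C(X × Y, ℝ)) = -1 := by
    have h : (-1 : C(X × Y, ℝ)) = ContinuousMap.const (X × Y) (-1) := by ext q; simp
    rw [h, Q_const]
  have hL1 : L 1 = 1 := by
    have h1 : L 1 ≤ 1 := (hLle 1).trans_eq hQ1
    have h2 : L (-1) ≤ -1 := (hLle (-1)).trans_eq hQm1
    rw [map_neg] at h2
    linarith
  have hxc : x₀ = -c + (-1) := by ext q; simp [hx₀]; ring
  have hxc2 : x₀ + 1 = -c := by ext q; simp [hx₀]
  have hQa : Q μ ν x₀ ≤ Q μ ν (-c) + Q μ ν (-1) := by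
    rw [hxc]; exact Q_add μ ν (-c) (-1)
  have hQb : Q μ ν (-c) ≤ Q μ ν x₀ + Q μ ν 1 := by
    have h := Q_add μ ν x₀ 1
    rwa [hxc2] at h
  have hQx₀ : Q μ ν x₀ = Q μ ν (-c) - 1 := by
    rw [hQm1] at hQa; rw [hQ1] at hQb; linarith
  have hLx : L x₀ = -L c - L 1 := by
    rw [hxc, map_add, map_neg, map_neg]; ring
  rw [hLx, hL1, hQx₀] at hLx₀
  linarith

end Duality

end KDuality

open KDuality in
/-- **Kantorovich duality on compact metric spaces.**
For compact metric spaces `X, Y`, Borel probability measures `μ, ν` and a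
continuous nonnegative cost `c`, there is an optimal plan `γ₀` whose cost
equals the supremum of `∫ h dμ + ∫ k dν` over continuous pairs `(h, k)` with
`h x + k y ≤ c (x, y)`. -/
theorem kantorovich_duality_compact
    {X Y : Type*} [MetricSpace X] [CompactSpace X] [MeasurableSpace X] [BorelSpace X]
    [MetricSpace Y] [CompactSpace Y] [MeasurableSpace Y] [BorelSpace Y]
    (μ : Measure X) [IsProbabilityMeasure μ] (ν : Measure Y) [IsProbabilityMeasure ν]
    (c : X × Y → ℝ) (hc : Continuous c) (hc0 : ∀ p, 0 ≤ c p) :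
    ∃ γ₀ : Measure (X × Y),
      γ₀.map Prod.fst = μ ∧ γ₀.map Prod.snd = ν ∧
      (∀ γ : Measure (X × Y), γ.map Prod.fst = μ → γ.map Prod.snd = ν →
        ∫ p, c p ∂γ₀ ≤ ∫ p, c p ∂γ) ∧
      IsLUB {r : ℝ | ∃ (h : C(X, ℝ)) (k : C(Y, ℝ)),
          (∀ x y, h x + k y ≤ c (x, y)) ∧ r = ∫ x, h x ∂μ + ∫ y, k y ∂ν}
        (∫ p, c p ∂γ₀) := by
  set cm : C(X × Y, ℝ) := ⟨c, hc⟩ with hcm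
  set D : Set ℝ := {r : ℝ | ∃ (h : C(X, ℝ)) (k : C(Y, ℝ)),
      (∀ x y, h x + k y ≤ c (x, y)) ∧ r = ∫ x, h x ∂μ + ∫ y, k y ∂ν} with hD
  obtain ⟨L, hLQ, hLc⟩ := exists_functional μ ν cm (fun p => hc0 p)
  have hLpos : ∀ f : C(X × Y, ℝ), (∀ p, 0 ≤ f p) → 0 ≤ L f := by
    intro f hf
    have h1 : L (-f) ≤ Q μ ν (-f) := hLQ (-f)
    have h2 : Q μ ν (-f) ≤ 0 := Q_le μ ν ⟨0, 0, fun p => by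
      simpa using hf p, by simp⟩
    rw [map_neg] at h1
    linarith
  set γ₀ : Measure (X × Y) := rmkMeasure hLpos with hγ₀
  have hrep : ∀ f : C(X × Y, ℝ), L f = ∫ p, f p ∂γ₀ := fun f => lam_eq_integral hLpos f
  haveI : IsFiniteMeasure γ₀ := by rw [hγ₀]; infer_instance
  have hLfst : ∀ h : C(X, ℝ), L (cfst h) = ∫ x, h x ∂μ := by
    intro h
    have h1 : L (cfst h) ≤ Q μ ν (cfst h) := hLQ _
    have h2 : Q μ ν (cfst h) ≤ ∫ x, h x ∂μ := Q_le μ ν ⟨h, 0, fun p => by simp, by simp⟩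
    have h3 : L (-(cfst h)) ≤ Q μ ν (-(cfst h)) := hLQ _
    have h4 : Q μ ν (-(cfst h)) ≤ ∫ x, (-h) x ∂μ := Q_le μ ν ⟨-h, 0, fun p => by simp, by simp⟩
    rw [map_neg] at h3
    have h5 : ∫ x, (-h) x ∂μ = -∫ x, h x ∂μ := by
      simp only [ContinuousMap.neg_apply]; exact integral_neg _
    rw [h5] at h4
    linarith
  have hLsnd : ∀ k : C(Y, ℝ), L (csnd k) = ∫ y, k y ∂ν := by
    intro k
    have h1 : L (csnd k) ≤ Q μ ν (csnd k) := hLQ _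
    have h2 : Q μ ν (csnd k) ≤ ∫ y, k y ∂ν := Q_le μ ν ⟨0, k, fun p => by simp, by simp⟩
    have h3 : L (-(csnd k)) ≤ Q μ ν (-(csnd k)) := hLQ _
    have h4 : Q μ ν (-(csnd k)) ≤ ∫ y, (-k) y ∂ν := Q_le μ ν ⟨0, -k, fun p => by simp, by simp⟩
    rw [map_neg] at h3
    have h5 : ∫ y, (-k) y ∂ν = -∫ y, k y ∂ν := by
      simp only [ContinuousMap.neg_apply]; exact integral_neg _
    rw [h5] at h4
    linarith
  have hmarg1 : γ₀.map Prod.fst = μ := by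
    haveI : IsFiniteMeasure (γ₀.map Prod.fst) :=
      ⟨by rw [Measure.map_apply measurable_fst MeasurableSet.univ]; exact measure_lt_top γ₀ _⟩
    refine ext_of_forall_lintegral_eq_of_IsFiniteMeasure (fun g => ?_)
    set gR : C(X, ℝ) := ⟨fun x => (g x : ℝ), Continuous.comp NNReal.continuous_coe g.continuous⟩
      with hgR
    have hint1 : Integrable (fun x => ((g x : ℝ≥0) : ℝ)) (γ₀.map Prod.fst) :=
      integrable_cm (γ₀.map Prod.fst) gR
    have hint2 : Integrable (fun x => ((g x : ℝ≥0) : ℝ)) μ := integrable_cm μ gR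
    rw [lintegral_coe_eq_integral g hint1, lintegral_coe_eq_integral g hint2]
    congr 1
    have h1 : ∫ x, gR x ∂(γ₀.map Prod.fst) = ∫ p, gR p.1 ∂γ₀ :=
      integral_map measurable_fst.aemeasurable gR.continuous.measurable.aestronglyMeasurable
    have h2 : ∫ p, gR p.1 ∂γ₀ = ∫ p, (cfst gR) p ∂γ₀ := rfl
    have h3 : ∫ x, ((g x : ℝ≥0) : ℝ) ∂(γ₀.map Prod.fst) = ∫ x, gR x ∂(γ₀.map Prod.fst) := rfl
    rw [h3, h1, h2, ← hrep, hLfst]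
    rfl
  have hmarg2 : γ₀.map Prod.snd = ν := by
    haveI : IsFiniteMeasure (γ₀.map Prod.snd) :=
      ⟨by rw [Measure.map_apply measurable_snd MeasurableSet.univ]; exact measure_lt_top γ₀ _⟩
    refine ext_of_forall_lintegral_eq_of_IsFiniteMeasure (fun g => ?_)
    set gR : C(Y, ℝ) := ⟨fun y => (g y : ℝ), Continuous.comp NNReal.continuous_coe g.continuous⟩
      with hgR
    have hint1 : Integrable (fun y => ((g y : ℝ≥0) : ℝ)) (γ₀.map Prod.snd) :=
      integrable_cm (γ₀.map Prod.snd) gR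
    have hint2 : Integrable (fun y => ((g y : ℝ≥0) : ℝ)) ν := integrable_cm ν gR
    rw [lintegral_coe_eq_integral g hint1, lintegral_coe_eq_integral g hint2]
    congr 1
    have h1 : ∫ y, gR y ∂(γ₀.map Prod.snd) = ∫ p, gR p.2 ∂γ₀ :=
      integral_map measurable_snd.aemeasurable gR.continuous.measurable.aestronglyMeasurable
    have h2 : ∫ p, gR p.2 ∂γ₀ = ∫ p, (csnd gR) p ∂γ₀ := rfl
    have h3 : ∫ y, ((g y : ℝ≥0) : ℝ) ∂(γ₀.map Prod.snd) = ∫ y, gR y ∂(γ₀.map Prod.snd) := rfl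
    rw [h3, h1, h2, ← hrep, hLsnd]
    rfl
  -- cost equals the sup of the dual problem
  have hcost : ∫ p, c p ∂γ₀ = sSup D := by
    have h0 : ∫ p, c p ∂γ₀ = ∫ p, cm p ∂γ₀ := rfl
    rw [h0, ← hrep cm, hLc, neg_Q_neg μ ν cm]
    rfl
  -- upper bound property
  have hub : ∀ γ : Measure (X × Y), γ.map Prod.fst = μ → γ.map Prod.snd = ν →
      ∀ r ∈ D, r ≤ ∫ p, c p ∂γ := by
    intro γ h1 h2 r hr
    obtain ⟨h, k, hadm, rfl⟩ := hr
    haveI := plan_prob μ γ h1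
    rw [← plan_integral_add μ ν γ h1 h2 h k]
    refine integral_mono (integrable_cm γ (cfst h + csnd k)) ?_ (fun p => hadm p.1 p.2)
    exact hc.integrable_of_hasCompactSupport (HasCompactSupport.of_compactSpace c)
  have hne : D.Nonempty := by
    refine ⟨0, 0, 0, fun x y => ?_, by simp⟩
    simpa using hc0 (x, y)
  have hprod1 : (μ.prod ν).map Prod.fst = μ := by
    rw [Measure.map_fst_prod]; simp [measure_univ]
  have hprod2 : (μ.prod ν).map Prod.snd = ν := by
    rw [Measure.map_snd_prod]; simp [measure_univ]
  have hbdd : BddAbove D := ⟨∫ p, c p ∂(μ.prod ν), fun r hr => hub _ hprod1 hprod2 r hr⟩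
  refine ⟨γ₀, hmarg1, hmarg2, ?_, ?_⟩
  · intro γ h1 h2
    rw [hcost]
    exact csSup_le hne (hub γ h1 h2)
  · rw [hcost]
    exact isLUB_csSup hne hbdd
end
end

section
/- Let f : ℝⁿ → ℝ be a convex function. Then the set of points where f is not differentiable is σ-finite with respect to the (n−1)-dimensional Hausdorff measure; i.e., it can be covered by countably many Borel sets each of finite ℋ^{n−1} measure. -/
set_option maxHeartbeats 1000000
open MeasureTheory Set Metric Filter Asymptotics
open scoped ENNReal Topology NNReal

namespace Zaj
noncomputable section

variable {n : ℕ} (f : EuclideanSpace ℝ (Fin n) → ℝ)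

def lineF (x : EuclideanSpace ℝ (Fin n)) (i : Fin n) : ℝ → ℝ :=
  fun t => f (x + t • EuclideanSpace.single i (1:ℝ))

def Dp (x : EuclideanSpace ℝ (Fin n)) (i : Fin n) : ℝ :=
  sInf (slope (lineF f x i) 0 '' Ioi 0)

def Dm (x : EuclideanSpace ℝ (Fin n)) (i : Fin n) : ℝ :=
  sSup (slope (lineF f x i) 0 '' Iio 0)

lemma lineF_zero (x : EuclideanSpace ℝ (Fin n)) (i : Fin n) : lineF f x i 0 = f x := by
  simp [lineF]

lemma lineF_convex (hf : ConvexOn ℝ Set.univ f) (x : EuclideanSpace ℝ (Fin n)) (i : Fin n) :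
    ConvexOn ℝ Set.univ (lineF f x i) := by
  have := hf.comp_affineMap
    (AffineMap.lineMap x (x + EuclideanSpace.single i (1:ℝ)) : ℝ →ᵃ[ℝ] _)
  simp only [Set.preimage_univ] at this
  have heq : lineF f x i = f ∘ ⇑(AffineMap.lineMap x (x + EuclideanSpace.single i (1:ℝ))) := by
    funext t
    simp only [lineF, Function.comp_apply, AffineMap.lineMap_apply, vsub_eq_sub, vadd_eq_add]
    congr 1
    module
  rw [heq]
  exact this

lemma slope_mono' (hf : ConvexOn ℝ Set.univ f) {x : EuclideanSpace ℝ (Fin n)} {i : Fin n}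
    {s t : ℝ} (hs : s ≠ 0) (ht : t ≠ 0) (hst : s ≤ t) :
    slope (lineF f x i) 0 s ≤ slope (lineF f x i) 0 t :=
  (lineF_convex f hf x i).slope_mono (mem_univ 0)
    ⟨mem_univ _, hs⟩ ⟨mem_univ _, ht⟩ hst

lemma bddBelow_slopes (hf : ConvexOn ℝ Set.univ f) (x : EuclideanSpace ℝ (Fin n)) (i : Fin n) :
    BddBelow (slope (lineF f x i) 0 '' Ioi 0) := by
  refine ⟨slope (lineF f x i) 0 (-1), ?_⟩
  rintro s ⟨t, ht, rfl⟩
  exact slope_mono' f hf (by norm_num) (ne_of_gt ht) (by linarith [mem_Ioi.1 ht])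

lemma bddAbove_slopes (hf : ConvexOn ℝ Set.univ f) (x : EuclideanSpace ℝ (Fin n)) (i : Fin n) :
    BddAbove (slope (lineF f x i) 0 '' Iio 0) := by
  refine ⟨slope (lineF f x i) 0 1, ?_⟩
  rintro s ⟨t, ht, rfl⟩
  exact slope_mono' f hf (ne_of_lt ht) (by norm_num) (by linarith [mem_Iio.1 ht])

lemma Dp_le_slope (hf : ConvexOn ℝ Set.univ f) {x : EuclideanSpace ℝ (Fin n)} {i : Fin n}
    {t : ℝ} (ht : 0 < t) : Dp f x i ≤ slope (lineF f x i) 0 t :=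
  csInf_le (bddBelow_slopes f hf x i) (mem_image_of_mem _ ht)

lemma slope_le_Dm (hf : ConvexOn ℝ Set.univ f) {x : EuclideanSpace ℝ (Fin n)} {i : Fin n}
    {t : ℝ} (ht : t < 0) : slope (lineF f x i) 0 t ≤ Dm f x i :=
  le_csSup (bddAbove_slopes f hf x i) (mem_image_of_mem _ ht)

lemma Dm_le_Dp (hf : ConvexOn ℝ Set.univ f) (x : EuclideanSpace ℝ (Fin n)) (i : Fin n) :
    Dm f x i ≤ Dp f x i := by
  refine csSup_le (⟨_, mem_image_of_mem _ (by norm_num : (-1:ℝ) ∈ Iio 0)⟩) ?_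
  rintro s ⟨t, ht, rfl⟩
  refine le_csInf (⟨_, mem_image_of_mem _ (by norm_num : (1:ℝ) ∈ Ioi 0)⟩) ?_
  rintro u ⟨r, hr, rfl⟩
  exact slope_mono' f hf (ne_of_lt ht) (ne_of_gt hr) (by linarith [mem_Iio.1 ht, mem_Ioi.1 hr])

lemma hasDerivAt_lineF (hf : ConvexOn ℝ Set.univ f) {x : EuclideanSpace ℝ (Fin n)} {i : Fin n}
    (h : Dm f x i = Dp f x i) : HasDerivAt (lineF f x i) (Dp f x i) 0 := by
  rw [hasDerivAt_iff_tendsto_slope]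
  rw [← nhdsLT_sup_nhdsGT, tendsto_sup]
  constructor
  · have := MonotoneOn.tendsto_nhdsLT (f := slope (lineF f x i) 0) (x := (0:ℝ))
      (fun s hs t ht hst => slope_mono' f hf (ne_of_lt hs) (ne_of_lt ht) hst)
      (bddAbove_slopes f hf x i)
    rw [show sSup (slope (lineF f x i) 0 '' Iio 0) = Dp f x i from h ▸ rfl] at this
    exact this
  · have := MonotoneOn.tendsto_nhdsGT (f := slope (lineF f x i) 0) (x := (0:ℝ))
      (fun s hs t ht hst => slope_mono' f hf (ne_of_gt hs) (ne_of_gt ht) hst)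
      (bddBelow_slopes f hf x i)
    exact this


lemma abs_coord_le_norm (h : EuclideanSpace ℝ (Fin n)) (i : Fin n) : |h i| ≤ ‖h‖ := by
  rw [EuclideanSpace.norm_eq, ← Real.sqrt_sq_eq_abs]
  apply Real.sqrt_le_sqrt
  have : |h i| ^ 2 ≤ ∑ j, ‖h j‖ ^ 2 := by
    rw [← Real.norm_eq_abs]
    exact Finset.single_le_sum (f := fun j => ‖h j‖ ^ 2) (fun j _ => by positivity)
      (Finset.mem_univ i)
  simpa [sq_abs] using this

lemma sum_single_eq (h : EuclideanSpace ℝ (Fin n)) :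
    ∑ i, h i • EuclideanSpace.single i (1:ℝ) = h := by
  classical
  have := (EuclideanSpace.basisFun (Fin n) ℝ).sum_repr h
  simpa [EuclideanSpace.basisFun_apply, EuclideanSpace.basisFun_repr] using this

lemma differentiableAt_of_forall (hf : ConvexOn ℝ Set.univ f) (hn : 0 < n)
    {x : EuclideanSpace ℝ (Fin n)} (h : ∀ i, Dm f x i = Dp f x i) :
    DifferentiableAt ℝ f x := by
  classical
  have hn' : (0:ℝ) < (n:ℝ) := by exact_mod_cast hn
  have hne : (n:ℝ) ≠ 0 := ne_of_gt hn'
  set d : Fin n → ℝ := fun i => Dp f x i with hd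
  set L : EuclideanSpace ℝ (Fin n) →L[ℝ] ℝ :=
    ∑ i, d i • (EuclideanSpace.proj i : EuclideanSpace ℝ (Fin n) →L[ℝ] ℝ) with hL
  have hLapp : ∀ v : EuclideanSpace ℝ (Fin n), L v = ∑ i, d i * v i := by
    intro v
    simp [hL, ContinuousLinearMap.sum_apply]
  -- each directional error is o(v)
  have hpsi : ∀ i : Fin n, (fun v : EuclideanSpace ℝ (Fin n) =>
      lineF f x i ((n:ℝ) * v i) - f x - ((n:ℝ) * v i) * d i) =o[𝓝 0] (fun v => v) := by
    intro i
    have hq : (fun t : ℝ => lineF f x i t - f x - t * d i) =o[𝓝 0] (fun t => t) := by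
      have h1 := hasDerivAt_lineF f hf (h i)
      rw [hasDerivAt_iff_isLittleO] at h1
      simpa [lineF_zero, smul_eq_mul, mul_comm] using h1
    have hm : Tendsto (fun v : EuclideanSpace ℝ (Fin n) => (n:ℝ) * v i) (𝓝 0) (𝓝 0) := by
      have hc : Continuous (fun v : EuclideanSpace ℝ (Fin n) => (n:ℝ) * v i) :=
        continuous_const.mul (EuclideanSpace.proj (𝕜 := ℝ) i).continuous
      simpa using hc.tendsto 0
    have h2 := hq.comp_tendsto hm
    refine h2.trans_isBigO ?_
    refine Asymptotics.IsBigO.of_bound (n:ℝ) ?_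
    filter_upwards with v
    simp only [Function.comp_apply, Real.norm_eq_abs]
    rw [abs_mul, abs_of_nonneg (Nat.cast_nonneg n)]
    exact mul_le_mul_of_nonneg_left (abs_coord_le_norm v i) (Nat.cast_nonneg n)
  set G : EuclideanSpace ℝ (Fin n) → ℝ := fun v =>
    (n:ℝ)⁻¹ * ∑ i, |lineF f x i ((n:ℝ) * v i) - f x - ((n:ℝ) * v i) * d i| with hGdef
  have hGnn : ∀ v, 0 ≤ G v := by
    intro v
    apply mul_nonneg (by positivity)
    exact Finset.sum_nonneg fun i _ => abs_nonneg _
  have hG : G =o[𝓝 0] (fun v => v) := by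
    refine Asymptotics.IsLittleO.const_mul_left ?_ _
    exact Asymptotics.IsLittleO.fun_sum fun i _ => (hpsi i).abs_left
  have hGneg : (fun v => G (-v)) =o[𝓝 0] (fun v : EuclideanSpace ℝ (Fin n) => v) := by
    have htneg : Tendsto (fun v : EuclideanSpace ℝ (Fin n) => -v) (𝓝 0) (𝓝 0) := by
      simpa using (continuous_neg (G := EuclideanSpace ℝ (Fin n))).tendsto 0
    have := hG.comp_tendsto htneg
    refine this.trans_isBigO ?_
    refine Asymptotics.IsBigO.of_bound 1 ?_
    filter_upwards with v
    simp
  -- upper bound via Jensen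
  have upper : ∀ v : EuclideanSpace ℝ (Fin n), f (x + v) - f x - L v ≤ G v := by
    intro v
    have hdecomp : x + v = ∑ i, ((n:ℝ)⁻¹) • (x + ((n:ℝ) * v i) • EuclideanSpace.single i (1:ℝ)) := by
      have hs := sum_single_eq v
      calc x + v = x + ∑ i, v i • EuclideanSpace.single i (1:ℝ) := by rw [hs]
        _ = ∑ i, ((n:ℝ)⁻¹) • (x + ((n:ℝ) * v i) • EuclideanSpace.single i (1:ℝ)) := by
            have hterm : ∀ i : Fin n, ((n:ℝ)⁻¹) • (x + ((n:ℝ) * v i) • EuclideanSpace.single i (1:ℝ))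
                = ((n:ℝ)⁻¹) • x + v i • EuclideanSpace.single i (1:ℝ) := by
              intro i
              rw [smul_add, smul_smul]
              congr 2
              field_simp
            rw [Finset.sum_congr rfl fun i _ => hterm i, Finset.sum_add_distrib,
              Finset.sum_const, Finset.card_univ, Fintype.card_fin,
              ← Nat.cast_smul_eq_nsmul ℝ, smul_smul, mul_inv_cancel₀ hne, one_smul]
    have hjen : f (x + v) ≤ ∑ i, ((n:ℝ)⁻¹) * f (x + ((n:ℝ) * v i) • EuclideanSpace.single i (1:ℝ)) := by
      rw [hdecomp]
      exact hf.map_sum_le (fun i _ => by positivity)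
        (by rw [Finset.sum_const, Finset.card_univ, Fintype.card_fin, nsmul_eq_mul]; field_simp)
        (fun i _ => mem_univ _)
    have : f (x + v) - f x - L v ≤
        ∑ i, (n:ℝ)⁻¹ * (lineF f x i ((n:ℝ) * v i) - f x - ((n:ℝ) * v i) * d i) := by
      rw [hLapp]
      calc f (x + v) - f x - ∑ i, d i * v i
          ≤ (∑ i, (n:ℝ)⁻¹ * lineF f x i ((n:ℝ) * v i)) - f x - ∑ i, d i * v i := by
            have heq : ∀ i, f (x + ((n:ℝ) * v i) • EuclideanSpace.single i (1:ℝ))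
                = lineF f x i ((n:ℝ) * v i) := fun i => rfl
            simp only [heq] at hjen
            linarith
        _ = ∑ i, (n:ℝ)⁻¹ * (lineF f x i ((n:ℝ) * v i) - f x - ((n:ℝ) * v i) * d i) := by
            have expand : ∀ i : Fin n,
                (n:ℝ)⁻¹ * (lineF f x i ((n:ℝ) * v i) - f x - ((n:ℝ) * v i) * d i)
                = (n:ℝ)⁻¹ * lineF f x i ((n:ℝ) * v i) - (n:ℝ)⁻¹ * f x - d i * v i := by
              intro i
              field_simp
            rw [Finset.sum_congr rfl fun i _ => expand i, Finset.sum_sub_distrib,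
              Finset.sum_sub_distrib, Finset.sum_const, Finset.card_univ, Fintype.card_fin,
              nsmul_eq_mul]
            have hfx : (n:ℝ) * ((n:ℝ)⁻¹ * f x) = f x := by field_simp
            rw [hfx]
    refine this.trans ?_
    show _ ≤ (n:ℝ)⁻¹ * ∑ i, |lineF f x i ((n:ℝ) * v i) - f x - ((n:ℝ) * v i) * d i|
    rw [Finset.mul_sum]
    exact Finset.sum_le_sum fun i _ =>
      mul_le_mul_of_nonneg_left (le_abs_self _) (by positivity)
  have lower : ∀ v : EuclideanSpace ℝ (Fin n),
      0 ≤ (f (x + v) - f x - L v) + (f (x + -v) - f x - L (-v)) := by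
    intro v
    have hmid := hf.2 (mem_univ (x + v)) (mem_univ (x + -v))
      (by norm_num : (0:ℝ) ≤ (1:ℝ)/2) (by norm_num : (0:ℝ) ≤ (1:ℝ)/2) (by norm_num)
    have harg : ((1:ℝ)/2) • (x + v) + ((1:ℝ)/2) • (x + -v) = x := by module
    rw [harg] at hmid
    simp only [smul_eq_mul] at hmid
    have : L (-v) = - L v := by rw [map_neg]
    linarith [hmid]
  have hF : (fun v : EuclideanSpace ℝ (Fin n) => f (x + v) - f x - L v) =o[𝓝 0]
      (fun v => v) := by
    have hbig : (fun v : EuclideanSpace ℝ (Fin n) => f (x + v) - f x - L v) =O[𝓝 0]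
        (fun v => G v + G (-v)) := by
      refine Asymptotics.IsBigO.of_bound 1 ?_
      filter_upwards with v
      rw [one_mul, Real.norm_eq_abs, Real.norm_eq_abs]
      have h1 := upper v
      have h2 := upper (-v)
      have h3 := lower v
      have h4 := hGnn v
      have h5 := hGnn (-v)
      have habs : |G v + G (-v)| = G v + G (-v) := abs_of_nonneg (by linarith)
      rw [abs_le, habs]
      constructor <;> linarith
    exact hbig.trans_isLittleO (hG.add hGneg)
  have : HasFDerivAt f L x := by
    rw [hasFDerivAt_iff_isLittleO_nhds_zero]
    exact hF
  exact this.differentiableAt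

/-- the bad sets -/
def M (i : Fin n) (a b : ℚ) (R : ℕ) : Set (EuclideanSpace ℝ (Fin n)) :=
  {x | ‖x‖ ≤ (R:ℝ) ∧ (a:ℝ) < (b:ℝ) ∧ Dm f x i ≤ (a:ℝ) ∧ (b:ℝ) ≤ Dp f x i}

lemma measure_ball_E_lt_top (m : ℕ) (r : ℝ) :
    μH[(m:ℝ)] {w : EuclideanSpace ℝ (Fin m) | ‖w‖ ≤ r} < ⊤ := by
  classical
  set ε := WithLp.equiv 2 (Fin m → ℝ)
  set K : ℝ≥0 := (Fintype.card (Fin m) : ℝ≥0) ^ ((1:ℝ≥0∞)/2).toReal with hK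
  have hlip : LipschitzWith K ε.symm :=
    (PiLp.antilipschitzWith_ofLp 2 _).to_rightInverse (fun y => ε.apply_symm_apply y)
  set S := {w : EuclideanSpace ℝ (Fin m) | ‖w‖ ≤ r} with hS
  have himg : S = ε.symm '' (ε '' S) := by
    rw [Set.image_image]; simp
  have hsub : ε '' S ⊆ Metric.closedBall (0 : Fin m → ℝ) |r| := by
    rintro w ⟨z, hz, rfl⟩
    rw [Metric.mem_closedBall, dist_zero_right]
    have h1 : ‖ε z‖ ≤ ‖z‖ := by
      have := (PiLp.lipschitzWith_ofLp 2 (fun _ : Fin m => ℝ)).dist_le_mul z 0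
      have h' : ‖z.ofLp‖ ≤ ‖z‖ := by simpa [dist_zero_right] using this
      exact h'
    exact h1.trans (hz.trans (le_abs_self r))
  have hpi : (μH[(m:ℝ)] : Measure (Fin m → ℝ)) = volume := by
    have := hausdorffMeasure_pi_real (ι := Fin m)
    simpa [Fintype.card_fin] using this
  calc μH[(m:ℝ)] S ≤ (K : ℝ≥0∞) ^ (m:ℝ) * μH[(m:ℝ)] (ε '' S) := by
        nth_rewrite 1 [himg]
        exact hlip.hausdorffMeasure_image_le (by positivity) _
    _ ≤ (K : ℝ≥0∞) ^ (m:ℝ) * μH[(m:ℝ)] (Metric.closedBall (0 : Fin m → ℝ) |r|) :=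
        mul_le_mul_right (measure_mono hsub) _
    _ < ⊤ := by
        rw [hpi]
        exact ENNReal.mul_lt_top
          (ENNReal.rpow_lt_top_of_nonneg (by positivity) ENNReal.coe_ne_top)
          ((isCompact_closedBall _ _).measure_lt_top)

lemma measure_hyperplane_lt_top {n : ℕ} (i : Fin n) (r : ℝ) :
    μH[(n:ℝ)-1] {z : EuclideanSpace ℝ (Fin n) | z i = 0 ∧ ‖z‖ ≤ r} < ⊤ := by
  classical
  obtain ⟨m, rfl⟩ : ∃ m, n = m + 1 := ⟨n - 1, (Nat.succ_pred_eq_of_pos i.pos).symm⟩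
  have hd : ((m+1:ℕ):ℝ) - 1 = (m:ℝ) := by push_cast; ring
  rw [hd]
  set τ : EuclideanSpace ℝ (Fin (m+1)) → EuclideanSpace ℝ (Fin m) :=
    fun z => (WithLp.equiv 2 (Fin m → ℝ)).symm (fun j => z (i.succAbove j)) with hτ
  set H := {z : EuclideanSpace ℝ (Fin (m+1)) | z i = 0 ∧ ‖z‖ ≤ r} with hH
  have hτ_apply : ∀ (z : EuclideanSpace ℝ (Fin (m+1))) (j : Fin m),
      τ z j = z (i.succAbove j) := by
    intro z j
    simp [hτ, WithLp.equiv_symm_apply]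
  have hnorm : ∀ z w : EuclideanSpace ℝ (Fin (m+1)), z i = 0 → w i = 0 →
      ‖τ z - τ w‖ = ‖z - w‖ := by
    intro z w hz hw
    rw [EuclideanSpace.norm_eq, EuclideanSpace.norm_eq]
    congr 1
    rw [Fin.sum_univ_succAbove (fun k => ‖(z - w) k‖ ^ 2) i]
    simp only [PiLp.sub_apply, hz, hw, sub_zero, norm_zero, ne_eq, OfNat.ofNat_ne_zero,
      not_false_eq_true, zero_pow, zero_add]
    apply Finset.sum_congr rfl
    intro j _
    rw [hτ_apply, hτ_apply]
  have hinj : Set.InjOn τ H := by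
    intro z hz w hw hzw
    have h1 : ‖z - w‖ = 0 := by
      rw [← hnorm z w hz.1 hw.1, hzw, sub_self, norm_zero]
    rwa [norm_sub_eq_zero_iff] at h1
  have hsub : H ⊆ Function.invFunOn τ H '' (τ '' H) := by
    intro z hz
    exact ⟨τ z, Set.mem_image_of_mem _ hz, hinj.leftInvOn_invFunOn hz⟩
  have hglip : LipschitzOnWith 1 (Function.invFunOn τ H) (τ '' H) := by
    apply LipschitzOnWith.of_dist_le_mul
    rintro p ⟨z, hz, rfl⟩ q ⟨w, hw, rfl⟩
    rw [hinj.leftInvOn_invFunOn hz, hinj.leftInvOn_invFunOn hw, NNReal.coe_one, one_mul,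
      dist_eq_norm, dist_eq_norm, ← hnorm z w hz.1 hw.1]
  have hτ_bound : τ '' H ⊆ {w : EuclideanSpace ℝ (Fin m) | ‖w‖ ≤ |r|} := by
    rintro p ⟨z, hz, rfl⟩
    have h2 : ‖τ z‖ ^ 2 ≤ ‖z‖ ^ 2 := by
      rw [EuclideanSpace.norm_eq, EuclideanSpace.norm_eq, Real.sq_sqrt (by positivity),
        Real.sq_sqrt (by positivity)]
      rw [Fin.sum_univ_succAbove (fun k => ‖z k‖ ^ 2) i]
      have : ∀ j : Fin m, ‖τ z j‖ ^ 2 = ‖z (i.succAbove j)‖ ^ 2 := fun j => by rw [hτ_apply]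
      rw [Finset.sum_congr rfl fun j _ => this j]
      exact le_add_of_nonneg_left (by positivity)
    have h3 : ‖τ z‖ ≤ ‖z‖ := by
      nlinarith [norm_nonneg (τ z), norm_nonneg z]
    exact h3.trans (hz.2.trans (le_abs_self r))
  calc μH[(m:ℝ)] H ≤ μH[(m:ℝ)] (Function.invFunOn τ H '' (τ '' H)) := measure_mono hsub
    _ ≤ ((1:ℝ≥0) : ℝ≥0∞) ^ (m:ℝ) * μH[(m:ℝ)] (τ '' H) :=
        hglip.hausdorffMeasure_image_le (by positivity)
    _ ≤ ((1:ℝ≥0) : ℝ≥0∞) ^ (m:ℝ) * μH[(m:ℝ)] {w : EuclideanSpace ℝ (Fin m) | ‖w‖ ≤ |r|} :=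
        mul_le_mul_right (measure_mono hτ_bound) _
    _ < ⊤ := by
        simp only [ENNReal.coe_one, ENNReal.one_rpow, one_mul]
        exact measure_ball_E_lt_top m |r|

lemma measure_M_lt_top (hf : ConvexOn ℝ Set.univ f) (i : Fin n) (a b : ℚ) (R : ℕ) :
    μH[(n:ℝ) - 1] (M f i a b R) < ⊤ := by
  classical
  rcases le_or_gt (b:ℝ) (a:ℝ) with hba | hab
  · have : M f i a b R = ∅ := by
      ext z
      simp only [M, Set.mem_setOf_eq, Set.mem_empty_iff_false, iff_false]
      rintro ⟨-, h1, -, -⟩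
      linarith
    rw [this]
    simp
  -- Lipschitz constant on a large ball
  have hcont : Continuous f := by
    rw [← continuousOn_univ]
    exact hf.continuousOn isOpen_univ
  set r : ℝ := 3 * R + 2 with hr
  have hbdd : Bornology.IsBounded (f '' Metric.ball (0 : EuclideanSpace ℝ (Fin n)) r) := by
    apply Bornology.IsBounded.subset
    · exact ((isCompact_closedBall (0 : EuclideanSpace ℝ (Fin n)) r).image hcont).isBounded
    · exact Set.image_mono Metric.ball_subset_closedBall
  obtain ⟨L, hL⟩ := (hf.subset (Set.subset_univ _)
    (convex_ball 0 r)).exists_lipschitzOnWith_of_isBounded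
    (show (3 * (R:ℝ) + 1) < r by rw [hr]; linarith) hbdd
  set C : ℝ := 2 * (L:ℝ) / ((b:ℝ) - (a:ℝ)) with hC
  have hC0 : 0 ≤ C := div_nonneg (by positivity) (by linarith)
  set e : EuclideanSpace ℝ (Fin n) := EuclideanSpace.single i (1:ℝ) with he
  set T : EuclideanSpace ℝ (Fin n) → EuclideanSpace ℝ (Fin n) :=
    fun z => z - (z i) • e with hT
  set A := M f i a b R with hA
  -- the key one-sided estimate
  have key2 : ∀ x ∈ A, ∀ y ∈ A, x i - y i ≤ C * ‖T x - T y‖ := by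
    intro x hx y hy
    obtain ⟨hxR, -, hxa, -⟩ := hx
    obtain ⟨hyR, -, -, hyb⟩ := hy
    set δ : ℝ := x i - y i with hδ
    rcases le_or_gt δ 0 with h0 | h0
    · exact h0.trans (by positivity)
    -- coordinate bounds
    have hxi : |x i| ≤ (R:ℝ) := (abs_coord_le_norm x i).trans hxR
    have hyi : |y i| ≤ (R:ℝ) := (abs_coord_le_norm y i).trans hyR
    have hδle : |δ| ≤ 2 * R := by
      rw [hδ, abs_sub_comm]  -- whatever; bound below
      calc |y i - x i| ≤ |y i| + |x i| := abs_sub _ _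
        _ ≤ 2 * R := by linarith
    -- slope estimates
    have hslope1 : (b:ℝ) * δ ≤ lineF f y i δ - f y := by
      have h1 : (b:ℝ) ≤ slope (lineF f y i) 0 δ := hyb.trans (Dp_le_slope f hf h0)
      rw [slope_def_field, lineF_zero, sub_zero] at h1
      calc (b:ℝ) * δ ≤ ((lineF f y i δ - f y) / δ) * δ :=
            mul_le_mul_of_nonneg_right h1 h0.le
        _ = lineF f y i δ - f y := by field_simp
    have hslope2 : (a:ℝ) * (-δ) ≤ lineF f x i (-δ) - f x := by
      have h1 : slope (lineF f x i) 0 (-δ) ≤ (a:ℝ) :=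
        (slope_le_Dm f hf (by linarith)).trans hxa
      rw [slope_def_field, lineF_zero, sub_zero] at h1
      have hnd : -δ < 0 := by linarith
      calc (a:ℝ) * (-δ) ≤ ((lineF f x i (-δ) - f x) / (-δ)) * (-δ) := by
            apply mul_le_mul_of_nonpos_right h1 hnd.le  -- careful direction
        _ = lineF f x i (-δ) - f x := by field_simp
    -- Lipschitz estimates
    have hball : ∀ z : EuclideanSpace ℝ (Fin n), ‖z‖ ≤ 3 * R →
        z ∈ Metric.ball (0 : EuclideanSpace ℝ (Fin n)) (3 * (R:ℝ) + 1) := by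
      intro z hz
      rw [Metric.mem_ball, dist_zero_right]
      linarith
    have hye : y + δ • e = x + (T y - T x) := by
      simp only [hT, he, hδ]
      module
    have hxe : x + (-δ) • e = y + (T x - T y) := by
      simp only [hT, he, hδ]
      module
    have hnormye : ‖y + δ • e‖ ≤ 3 * R := by
      calc ‖y + δ • e‖ ≤ ‖y‖ + ‖δ • e‖ := norm_add_le _ _
        _ = ‖y‖ + |δ| := by
            rw [norm_smul, he, EuclideanSpace.norm_single, Real.norm_eq_abs, norm_one, mul_one]
        _ ≤ 3 * R := by linarith
    have hnormxe : ‖x + (-δ) • e‖ ≤ 3 * R := by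
      calc ‖x + (-δ) • e‖ ≤ ‖x‖ + ‖(-δ) • e‖ := norm_add_le _ _
        _ = ‖x‖ + |δ| := by
            rw [norm_smul, he, EuclideanSpace.norm_single, Real.norm_eq_abs, norm_one, mul_one,
              abs_neg]
        _ ≤ 3 * R := by linarith
    have hxball : x ∈ Metric.ball (0 : EuclideanSpace ℝ (Fin n)) (3 * (R:ℝ) + 1) :=
      hball x (by linarith [hxR])
    have hyball : y ∈ Metric.ball (0 : EuclideanSpace ℝ (Fin n)) (3 * (R:ℝ) + 1) :=
      hball y (by linarith [hyR])
    have hlip1 : |f (y + δ • e) - f x| ≤ (L:ℝ) * ‖T y - T x‖ := by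
      have := hL.dist_le_mul _ (hball _ hnormye) _ hxball
      rw [Real.dist_eq, dist_eq_norm] at this
      refine this.trans ?_
      apply mul_le_mul_of_nonneg_left _ (L:ℝ≥0).coe_nonneg
      rw [hye, add_sub_cancel_left]
    have hlip2 : |f (x + (-δ) • e) - f y| ≤ (L:ℝ) * ‖T x - T y‖ := by
      have := hL.dist_le_mul _ (hball _ hnormxe) _ hyball
      rw [Real.dist_eq, dist_eq_norm] at this
      refine this.trans ?_
      apply mul_le_mul_of_nonneg_left _ (L:ℝ≥0).coe_nonneg
      rw [hxe, add_sub_cancel_left]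
    -- combine
    have heq1 : lineF f y i δ = f (y + δ • e) := rfl
    have heq2 : lineF f x i (-δ) = f (x + (-δ) • e) := rfl
    rw [heq1] at hslope1
    rw [heq2] at hslope2
    have hTrev : ‖T y - T x‖ = ‖T x - T y‖ := norm_sub_rev _ _
    rw [hTrev] at hlip1
    have hab1 := abs_le.1 hlip1
    have hab2 := abs_le.1 hlip2
    have hfinal : ((b:ℝ) - (a:ℝ)) * δ ≤ 2 * (L:ℝ) * ‖T x - T y‖ := by nlinarith [hab1.2, hab2.2]
    rw [hC, div_mul_eq_mul_div, le_div_iff₀ (by linarith : (0:ℝ) < (b:ℝ) - (a:ℝ))]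
    nlinarith [hfinal]
  have key : ∀ x ∈ A, ∀ y ∈ A, |x i - y i| ≤ C * ‖T x - T y‖ := by
    intro x hx y hy
    rcases le_total (y i) (x i) with h | h
    · rw [abs_of_nonneg (by linarith)]
      exact key2 x hx y hy
    · rw [abs_of_nonpos (by linarith), neg_sub]
      rw [norm_sub_rev]
      exact key2 y hy x hx
  -- injectivity on A and Lipschitz inverse
  have hTdiff : ∀ z w : EuclideanSpace ℝ (Fin n), z - w = (T z - T w) + (z i - w i) • e := by
    intro z w
    simp only [hT]
    module
  have hinj : Set.InjOn T A := by
    intro z hz w hw hzw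
    have h1 : |z i - w i| ≤ C * ‖T z - T w‖ := key z hz w hw
    rw [hzw, sub_self, norm_zero, mul_zero] at h1
    have h2 : z i = w i := by
      have := abs_nonneg (z i - w i)
      have h3 : |z i - w i| = 0 := le_antisymm h1 this
      rw [abs_eq_zero, sub_eq_zero] at h3
      exact h3
    have := hTdiff z w
    rw [hzw, sub_self, h2, sub_self, zero_smul, add_zero] at this
    rwa [sub_eq_zero] at this
  have hsubA : A ⊆ Function.invFunOn T A '' (T '' A) := by
    intro z hz
    exact ⟨T z, Set.mem_image_of_mem _ hz, hinj.leftInvOn_invFunOn hz⟩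
  set K' : ℝ≥0 := (1 + C).toNNReal with hK'
  have hglip : LipschitzOnWith K' (Function.invFunOn T A) (T '' A) := by
    apply LipschitzOnWith.of_dist_le_mul
    rintro p ⟨z, hz, rfl⟩ q ⟨w, hw, rfl⟩
    rw [hinj.leftInvOn_invFunOn hz, hinj.leftInvOn_invFunOn hw, dist_eq_norm, dist_eq_norm]
    have h1 : ‖z - w‖ ≤ ‖T z - T w‖ + |z i - w i| := by
      calc ‖z - w‖ = ‖(T z - T w) + (z i - w i) • e‖ := by rw [← hTdiff]
        _ ≤ ‖T z - T w‖ + ‖(z i - w i) • e‖ := norm_add_le _ _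
        _ = ‖T z - T w‖ + |z i - w i| := by
            rw [norm_smul, he, EuclideanSpace.norm_single, Real.norm_eq_abs, norm_one, mul_one]
    have h2 := key z hz w hw
    have h3 : (K' : ℝ) = 1 + C := by
      rw [hK', Real.coe_toNNReal _ (by linarith)]
    rw [h3]
    calc ‖z - w‖ ≤ ‖T z - T w‖ + C * ‖T z - T w‖ := by linarith
      _ = (1 + C) * ‖T z - T w‖ := by ring
  -- image of T lands in the hyperplane
  have hTim : T '' A ⊆ {z : EuclideanSpace ℝ (Fin n) | z i = 0 ∧ ‖z‖ ≤ 2 * R} := by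
    rintro p ⟨z, hz, rfl⟩
    constructor
    · simp only [hT, PiLp.sub_apply, PiLp.smul_apply, he, EuclideanSpace.single_apply,
        smul_eq_mul]
      simp
    · obtain ⟨hzR, -, -, -⟩ := hz
      have hzi : |z i| ≤ (R:ℝ) := (abs_coord_le_norm z i).trans hzR
      calc ‖T z‖ ≤ ‖z‖ + ‖(z i) • e‖ := norm_sub_le _ _
        _ = ‖z‖ + |z i| := by
            rw [norm_smul, he, EuclideanSpace.norm_single, Real.norm_eq_abs, norm_one, mul_one]
        _ ≤ 2 * R := by linarith
  have hd0 : (0:ℝ) ≤ (n:ℝ) - 1 := by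
    have := i.pos
    have h1 : (1:ℝ) ≤ (n:ℝ) := by exact_mod_cast this
    linarith
  calc μH[(n:ℝ)-1] A ≤ μH[(n:ℝ)-1] (Function.invFunOn T A '' (T '' A)) := measure_mono hsubA
    _ ≤ (K' : ℝ≥0∞) ^ ((n:ℝ)-1) * μH[(n:ℝ)-1] (T '' A) :=
        hglip.hausdorffMeasure_image_le hd0
    _ ≤ (K' : ℝ≥0∞) ^ ((n:ℝ)-1) *
        μH[(n:ℝ)-1] {z : EuclideanSpace ℝ (Fin n) | z i = 0 ∧ ‖z‖ ≤ 2 * R} :=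
        mul_le_mul_right (measure_mono hTim) _
    _ < ⊤ :=
        ENNReal.mul_lt_top
          (ENNReal.rpow_lt_top_of_nonneg hd0 ENNReal.coe_ne_top)
          (measure_hyperplane_lt_top i (2 * R))

lemma mem_M_of_nondiff (hf : ConvexOn ℝ Set.univ f) (hn : 0 < n)
    {x : EuclideanSpace ℝ (Fin n)} (hx : ¬ DifferentiableAt ℝ f x) :
    ∃ i a b R, x ∈ M f i a b R := by
  by_contra hcon
  push_neg at hcon
  refine hx (differentiableAt_of_forall f hf hn fun i => ?_)
  by_contra hne
  have hlt : Dm f x i < Dp f x i := lt_of_le_of_ne (Dm_le_Dp f hf x i) hne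
  obtain ⟨a, ha1, ha2⟩ := exists_rat_btwn hlt
  obtain ⟨b, hb1, hb2⟩ := exists_rat_btwn ha2
  exact hcon i a b ⌈‖x‖⌉₊ ⟨Nat.le_ceil _, by exact_mod_cast hb1, ha1.le, hb2.le⟩

end
end Zaj

open MeasureTheory
open scoped ENNReal

/-- **σ-finiteness of the non-differentiability set of a convex function.**
The set where a convex function `f : ℝⁿ → ℝ` fails to be differentiable can be
covered by countably many Borel sets of finite `ℋ^{n−1}` measure. -/
theorem nondifferentiability_set_of_convex_sigma_finite (n : ℕ)
    (f : EuclideanSpace ℝ (Fin n) → ℝ) (hf : ConvexOn ℝ Set.univ f) :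
    ∃ B : ℕ → Set (EuclideanSpace ℝ (Fin n)),
      (∀ i, MeasurableSet (B i) ∧ μH[(n : ℝ) - 1] (B i) < ⊤) ∧
      {x | ¬ DifferentiableAt ℝ f x} ⊆ ⋃ i, B i := by
  rcases Nat.eq_zero_or_pos n with hn | hn
  · subst hn
    refine ⟨fun _ => ∅, fun i => ⟨MeasurableSet.empty, by simp⟩, ?_⟩
    intro x hx
    exfalso
    apply hx
    have hfx : f = fun _ => f x := by
      funext y
      congr 1
      exact Subsingleton.elim y x
    rw [hfx]
    exact differentiableAt_const _
  · set μ : Measure (EuclideanSpace ℝ (Fin n)) := μH[(n : ℝ) - 1] with hμ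
    have : Nonempty (Fin n × ℚ × ℚ × ℕ) := ⟨⟨⟨0, hn⟩, 0, 0, 0⟩⟩
    obtain ⟨e, he⟩ := exists_surjective_nat (Fin n × ℚ × ℚ × ℕ)
    refine ⟨fun k => toMeasurable μ (Zaj.M f (e k).1 (e k).2.1 (e k).2.2.1 (e k).2.2.2),
      fun k => ⟨measurableSet_toMeasurable _ _, ?_⟩, ?_⟩
    · rw [measure_toMeasurable]
      exact Zaj.measure_M_lt_top f hf _ _ _ _
    · intro x hx
      obtain ⟨i, a, b, R, hmem⟩ := Zaj.mem_M_of_nondiff f hf hn hx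
      obtain ⟨k, hk⟩ := he ⟨i, a, b, R⟩
      exact Set.mem_iUnion.2 ⟨k, subset_toMeasurable _ _ (by rw [hk]; exact hmem)⟩
end

section
/- Let μ and ν be Borel probability measures on ℝ with finite first moments, assume μ has no atoms, and let T : ℝ → ℝ be the monotone nondecreasing rearrangement map defined by T(x) = inf { y ∈ ℝ : ν((−∞, y]) ≥ μ((−∞, x]) }. Then T_#μ = ν, and for every convex function h : ℝ → [0, +∞), T minimizes ∫ h(ψ(x) − x) dμ(x) among all Borel maps ψ : ℝ → ℝ with ψ_#μ = ν. -/
open MeasureTheory Set Filter Topology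
open scoped ENNReal

namespace MROpt

lemma measIic_mono (μ : Measure ℝ) : Monotone (fun x => μ (Iic x)) :=
  fun _ _ hab => measure_mono (Iic_subset_Iic.2 hab)

lemma measIic_measurable (μ : Measure ℝ) : Measurable (fun x => μ (Iic x)) :=
  (measIic_mono μ).measurable

lemma measIic_le_one (μ : Measure ℝ) [IsProbabilityMeasure μ] (x : ℝ) : μ (Iic x) ≤ 1 :=
  prob_le_one

lemma iInf_measIic (μ : Measure ℝ) [IsProbabilityMeasure μ] :
    ⨅ n : ℕ, μ (Iic (-(n:ℝ))) = 0 := by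
  have hanti : Antitone (fun n : ℕ => Iic (-(n:ℝ))) := by
    intro a b hab
    exact Iic_subset_Iic.2 (by exact_mod_cast neg_le_neg (by exact_mod_cast hab))
  have h : (⋂ n : ℕ, Iic (-(n:ℝ))) = ∅ := by
    ext x
    simp only [mem_iInter, mem_Iic, mem_empty_iff_false, iff_false, not_forall, not_le]
    obtain ⟨n, hn⟩ := exists_nat_gt (-x)
    exact ⟨n, by linarith⟩
  have := hanti.measure_iInter (μ := μ) (fun n => measurableSet_Iic.nullMeasurableSet)
    ⟨0, measure_ne_top μ _⟩
  rw [h, measure_empty] at this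
  exact this.symm

lemma iSup_measIic (μ : Measure ℝ) [IsProbabilityMeasure μ] :
    ⨆ n : ℕ, μ (Iic (n:ℝ)) = 1 := by
  have hmono : Monotone (fun n : ℕ => Iic ((n:ℝ))) := by
    intro a b hab
    exact Iic_subset_Iic.2 (by exact_mod_cast hab)
  have h : (⋃ n : ℕ, Iic ((n:ℝ))) = univ := by
    ext x
    simp only [mem_iUnion, mem_Iic, mem_univ, iff_true]
    obtain ⟨n, hn⟩ := exists_nat_gt x
    exact ⟨n, hn.le⟩
  have := hmono.measure_iUnion (μ := μ)
  rw [h, measure_univ] at this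
  exact this.symm

/-- right continuity of `x ↦ μ (Iic x)` -/
lemma measIic_right_cont (μ : Measure ℝ) [IsFiniteMeasure μ] (x : ℝ) :
    ⨅ n : ℕ, μ (Iic (x + 1/(n+1))) = μ (Iic x) := by
  have hanti : Antitone (fun n : ℕ => Iic (x + 1/((n:ℝ)+1))) := by
    intro a b hab
    apply Iic_subset_Iic.2
    have : 1/((b:ℝ)+1) ≤ 1/((a:ℝ)+1) := by
      apply one_div_le_one_div_of_le (by positivity)
      exact_mod_cast add_le_add_left (by exact_mod_cast hab) 1
    linarith
  have h : (⋂ n : ℕ, Iic (x + 1/((n:ℝ)+1))) = Iic x := by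
    ext z
    simp only [mem_iInter, mem_Iic]
    constructor
    · intro hz
      by_contra hzx
      push_neg at hzx
      obtain ⟨n, hn⟩ := exists_nat_gt (1/(z - x))
      have hpos : (0:ℝ) < z - x := by linarith
      have h1 : 1/((n:ℝ)+1) < z - x := by
        rw [div_lt_iff₀ (by positivity)]
        rw [div_lt_iff₀ hpos] at hn
        nlinarith [hn]
      have := hz n
      linarith
    · intro hz n
      have : (0:ℝ) < 1/((n:ℝ)+1) := by positivity
      linarith
  have := hanti.measure_iInter (μ := μ) (fun n => measurableSet_Iic.nullMeasurableSet)
    ⟨0, measure_ne_top μ _⟩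
  rw [h] at this
  exact this.symm

/-- `μ (Iio x)` as sup -/
lemma measIio_eq (μ : Measure ℝ) (x : ℝ) :
    μ (Iio x) = ⨆ n : ℕ, μ (Iic (x - 1/(n+1))) := by
  have hmono : Monotone (fun n : ℕ => Iic (x - 1/((n:ℝ)+1))) := by
    intro a b hab
    apply Iic_subset_Iic.2
    have : 1/((b:ℝ)+1) ≤ 1/((a:ℝ)+1) := by
      apply one_div_le_one_div_of_le (by positivity)
      exact_mod_cast add_le_add_left (by exact_mod_cast hab) 1
    linarith
  have h : (⋃ n : ℕ, Iic (x - 1/((n:ℝ)+1))) = Iio x := by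
    ext z
    simp only [mem_iUnion, mem_Iic, mem_Iio]
    constructor
    · rintro ⟨n, hn⟩
      have : (0:ℝ) < 1/((n:ℝ)+1) := by positivity
      linarith
    · intro hz
      obtain ⟨n, hn⟩ := exists_nat_gt (1/(x - z))
      have hpos : (0:ℝ) < x - z := by linarith
      refine ⟨n, ?_⟩
      have h1 : 1/((n:ℝ)+1) < x - z := by
        rw [div_lt_iff₀ (by positivity)]
        rw [div_lt_iff₀ hpos] at hn
        nlinarith [hn]
      linarith
  rw [← h, hmono.measure_iUnion]


variable {μ : Measure ℝ} [IsProbabilityMeasure μ]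

lemma measIic_eq_measIio (hatom : ∀ x : ℝ, μ {x} = 0) (x : ℝ) : μ (Iic x) = μ (Iio x) := by
  refine le_antisymm ?_ (measure_mono Iio_subset_Iic_self)
  calc μ (Iic x) = μ (Iio x ∪ {x}) := by rw [Iio_union_right]
  _ ≤ μ (Iio x) + μ {x} := measure_union_le _ _
  _ = μ (Iio x) := by rw [hatom, add_zero]

set_option maxHeartbeats 800000 in
/-- The fundamental level-set identity: `μ {x | μ(Iic x) ≤ c} = c` for `c ≤ 1`. -/
lemma meas_levelSet (hatom : ∀ x : ℝ, μ {x} = 0) {c : ℝ≥0∞} (hc : c ≤ 1) :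
    μ {x | μ (Iic x) ≤ c} = c := by
  rcases eq_or_lt_of_le hc with hc1 | hc1
  · have : {x | μ (Iic x) ≤ c} = univ := eq_univ_of_forall fun x => by
      rw [hc1]; exact measIic_le_one μ x
    rw [this, measure_univ, hc1]
  set S := {x : ℝ | μ (Iic x) ≤ c} with hS
  have hbdd : BddAbove S := by
    obtain ⟨n, hn⟩ : ∃ n : ℕ, c < μ (Iic (n:ℝ)) := by
      have h := iSup_measIic μ
      rw [← h] at hc1
      exact lt_iSup_iff.mp hc1
    refine ⟨n, fun s hs => ?_⟩
    by_contra hsn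
    push_neg at hsn
    have h2 : μ (Iic (n:ℝ)) ≤ μ (Iic s) := measIic_mono μ hsn.le
    exact absurd (le_trans h2 hs) (not_le.mpr hn)
  rcases eq_empty_or_nonempty S with hSe | hSne
  · rw [hSe, measure_empty]
    by_contra hc0
    have hc0' : 0 < c := pos_iff_ne_zero.mpr (fun h => hc0 h.symm)
    obtain ⟨n, hn⟩ : ∃ n : ℕ, μ (Iic (-(n:ℝ))) < c := by
      have h := iInf_measIic μ
      have h2 : ⨅ n : ℕ, μ (Iic (-(n:ℝ))) < c := by rw [h]; exact hc0'
      exact iInf_lt_iff.mp h2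
    have hmem : (-(n:ℝ)) ∈ S := hn.le
    rw [hSe] at hmem
    exact hmem
  set x₀ := sSup S with hx0
  have hIio : ∀ x < x₀, μ (Iic x) ≤ c := by
    intro x hx
    obtain ⟨s, hsS, hxs⟩ := exists_lt_of_lt_csSup hSne hx
    exact le_trans (measIic_mono μ hxs.le) hsS
  have hup : μ (Iio x₀) ≤ c := by
    rw [measIio_eq μ x₀]
    refine iSup_le fun n => hIio _ ?_
    have : (0:ℝ) < 1/((n:ℝ)+1) := by positivity
    linarith
  have hlow : c ≤ μ (Iic x₀) := by
    by_contra hlt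
    push_neg at hlt
    obtain ⟨n, hn⟩ : ∃ n : ℕ, μ (Iic (x₀ + 1/((n:ℝ)+1))) < c := by
      have h := measIic_right_cont μ x₀
      exact iInf_lt_iff.mp (h ▸ hlt)
    have hmem : x₀ + 1/((n:ℝ)+1) ∈ S := hn.le
    have h3 := le_csSup hbdd hmem
    have hpos : (0:ℝ) < 1/((n:ℝ)+1) := by positivity
    linarith
  have h1 : μ S ≤ c := by
    have hsub : S ⊆ Iic x₀ := fun s hs => le_csSup hbdd hs
    calc μ S ≤ μ (Iic x₀) := measure_mono hsub
    _ = μ (Iio x₀) := measIic_eq_measIio hatom x₀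
    _ ≤ c := hup
  have h2 : c ≤ μ S := by
    have hsub : Iio x₀ ⊆ S := fun x hx => hIio x hx
    calc c ≤ μ (Iic x₀) := hlow
    _ = μ (Iio x₀) := measIic_eq_measIio hatom x₀
    _ ≤ μ S := measure_mono hsub
  exact le_antisymm h1 h2

/-- the level sets `{x | μ(Iic x) = c}` are null. -/
lemma meas_levelSet_eq_null (hatom : ∀ x : ℝ, μ {x} = 0) {c : ℝ≥0∞} (hc : c ≤ 1) :
    μ {x | μ (Iic x) = c} = 0 := by
  rcases eq_or_ne c 0 with rfl | hc0
  · have hsub : {x | μ (Iic x) = 0} ⊆ {x | μ (Iic x) ≤ 0} :=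
      setOf_subset_setOf.mpr (fun x hx => le_of_eq hx)
    exact le_antisymm (le_trans (measure_mono hsub)
      (le_of_eq (meas_levelSet hatom zero_le))) zero_le
  have hlt : c ≤ μ {x | μ (Iic x) < c} := by
    by_contra hcon
    push_neg at hcon
    obtain ⟨c', hc1', hc2'⟩ := exists_between hcon
    have hc'le : c' ≤ 1 := le_trans hc2'.le hc
    have heq := meas_levelSet hatom hc'le
    have hsub : {x | μ (Iic x) ≤ c'} ⊆ {x | μ (Iic x) < c} :=
      setOf_subset_setOf.mpr (fun x hx => lt_of_le_of_lt hx hc2')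
    exact absurd (heq ▸ measure_mono hsub) (not_le.mpr hc1')
  have hunion : μ {x | μ (Iic x) < c} + μ {x | μ (Iic x) = c} = μ {x | μ (Iic x) ≤ c} := by
    rw [← measure_union ?hd ?hm]
    · congr 1
      ext x
      simp only [mem_union, mem_setOf_eq]
      exact ⟨fun h => h.elim le_of_lt le_of_eq, fun h => lt_or_eq_of_le h⟩
    case hd =>
      rw [Set.disjoint_left]
      intro x hx1 hx2
      simp only [mem_setOf_eq] at hx1 hx2
      exact absurd hx2 (ne_of_lt hx1)
    case hm => exact (measIic_measurable μ) (measurableSet_singleton c)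
  rw [meas_levelSet hatom hc] at hunion
  have h1 : μ {x | μ (Iic x) < c} = c := by
    refine le_antisymm ?_ hlt
    calc μ {x | μ (Iic x) < c} ≤ μ {x | μ (Iic x) ≤ c} :=
      measure_mono (setOf_subset_setOf.mpr (fun x hx => le_of_lt hx))
    _ = c := meas_levelSet hatom hc
  rw [h1] at hunion
  have hcne : c ≠ ⊤ := ne_top_of_le_ne_top ENNReal.one_ne_top hc
  exact (ENNReal.add_right_inj hcne).mp (by rw [add_zero]; exact hunion)

section T
variable {ν : Measure ℝ} [IsProbabilityMeasure ν] {T : ℝ → ℝ}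
  (hT : ∀ x, T x = sInf {y : ℝ | μ (Set.Iic x) ≤ ν (Set.Iic y)})

include hT

lemma S_bddBelow {x : ℝ} (h0 : 0 < μ (Iic x)) :
    BddBelow {y : ℝ | μ (Set.Iic x) ≤ ν (Set.Iic y)} := by
  obtain ⟨n, hn⟩ : ∃ n : ℕ, ν (Iic (-(n:ℝ))) < μ (Iic x) := by
    have h := iInf_measIic ν
    exact iInf_lt_iff.mp (by rw [h]; exact h0)
  refine ⟨-(n:ℝ), fun y hy => ?_⟩
  by_contra hc
  push_neg at hc
  exact absurd (le_trans hy (measIic_mono ν hc.le)) (not_le.mpr hn)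

lemma S_nonempty {x : ℝ} (h1 : μ (Iic x) < 1) :
    Set.Nonempty {y : ℝ | μ (Set.Iic x) ≤ ν (Set.Iic y)} := by
  obtain ⟨n, hn⟩ : ∃ n : ℕ, μ (Iic x) < ν (Iic (n:ℝ)) := by
    have h := iSup_measIic ν
    exact lt_iSup_iff.mp (by rw [h]; exact h1)
  exact ⟨n, hn.le⟩

lemma T_mem_S {x : ℝ} (h0 : 0 < μ (Iic x)) (h1 : μ (Iic x) < 1) :
    μ (Iic x) ≤ ν (Iic (T x)) := by
  rw [← measIic_right_cont ν (T x)]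
  refine le_iInf fun n => ?_
  have hlt : sInf {y : ℝ | μ (Set.Iic x) ≤ ν (Set.Iic y)} < T x + 1/((n:ℝ)+1) := by
    rw [← hT x]
    have : (0:ℝ) < 1/((n:ℝ)+1) := by positivity
    linarith
  obtain ⟨s, hs, hslt⟩ := (csInf_lt_iff (S_bddBelow hT h0) (S_nonempty hT h1)).mp hlt
  exact le_trans hs (measIic_mono ν hslt.le)

lemma T_le_iff {x : ℝ} (h0 : 0 < μ (Iic x)) (h1 : μ (Iic x) < 1) {y : ℝ} :
    T x ≤ y ↔ μ (Iic x) ≤ ν (Iic y) := by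
  constructor
  · intro hxy
    exact le_trans (T_mem_S hT h0 h1) (measIic_mono ν hxy)
  · intro hy
    rw [hT x]
    exact csInf_le (S_bddBelow hT h0) hy

lemma T_of_zero {x : ℝ} (h0 : μ (Iic x) = 0) : T x = 0 := by
  rw [hT x]
  have : {y : ℝ | μ (Set.Iic x) ≤ ν (Set.Iic y)} = univ := eq_univ_of_forall fun y => by
    simp [h0]
  rw [this, csInf_of_not_bddBelow, Real.sInf_empty]
  rintro ⟨b, hb⟩
  have := hb (mem_univ (b - 1))
  linarith

lemma T_of_one {x : ℝ} (h1 : μ (Iic x) = 1) :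
    T x = sInf {y : ℝ | ν (Set.Iic y) = 1} := by
  rw [hT x, h1]
  congr 1
  ext y
  simp only [mem_setOf_eq]
  exact ⟨fun h => le_antisymm (measIic_le_one ν y) h, fun h => h.symm.le⟩

lemma measurable_T (hatom : ∀ x : ℝ, μ {x} = 0) : Measurable T := by
  apply measurable_of_Iic
  intro y
  classical
  have hdec : T ⁻¹' (Iic y) =
      ({x | 0 < μ (Iic x) ∧ μ (Iic x) < 1} ∩ {x | μ (Iic x) ≤ ν (Iic y)})
      ∪ ({x | μ (Iic x) = 0} ∩ (if (0:ℝ) ≤ y then univ else ∅))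
      ∪ ({x | μ (Iic x) = 1} ∩
          (if sInf {y : ℝ | ν (Set.Iic y) = 1} ≤ y then univ else ∅)) := by
    ext x
    simp only [mem_preimage, mem_Iic, mem_union, mem_inter_iff, mem_setOf_eq]
    rcases eq_or_lt_of_le (zero_le : 0 ≤ μ (Iic x)) with h0 | h0
    · have hx0 := T_of_zero hT h0.symm
      constructor
      · intro h
        refine Or.inl (Or.inr ⟨h0.symm, ?_⟩)
        rw [if_pos (hx0 ▸ h)]
        trivial
      · intro h
        rw [hx0]
        rcases h with (⟨⟨ha, _⟩, _⟩ | ⟨ha, hb⟩) | ⟨ha, hb⟩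
        · rw [← h0] at ha; exact absurd ha (lt_irrefl _)
        · by_contra hc
          rw [if_neg (by push_neg at hc ⊢; exact hc)] at hb
          exact hb
        · rw [ha] at h0
          exact absurd h0.symm one_ne_zero
    rcases eq_or_lt_of_le (measIic_le_one μ x) with h1 | h1
    · have hx1 := T_of_one hT h1
      constructor
      · intro h
        refine Or.inr ⟨h1, ?_⟩
        rw [if_pos (hx1 ▸ h)]
        trivial
      · intro h
        rw [hx1]
        rcases h with (⟨⟨_, hb⟩, _⟩ | ⟨ha, _⟩) | ⟨_, hb⟩
        · rw [h1] at hb; exact absurd hb (lt_irrefl _)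
        · rw [ha] at h0; exact absurd h0 (lt_irrefl _)
        · by_contra hc
          rw [if_neg (by push_neg at hc ⊢; exact hc)] at hb
          exact hb
    · constructor
      · intro h
        exact Or.inl (Or.inl ⟨⟨h0, h1⟩, (T_le_iff hT h0 h1).mp h⟩)
      · intro h
        rcases h with (⟨_, hb⟩ | ⟨ha, _⟩) | ⟨ha, _⟩
        · exact (T_le_iff hT h0 h1).mpr hb
        · rw [ha] at h0; exact absurd h0 (lt_irrefl _)
        · rw [ha] at h1; exact absurd h1 (lt_irrefl _)
  rw [hdec]
  have hm := measIic_measurable μ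
  refine MeasurableSet.union (MeasurableSet.union ?_ ?_) ?_
  · exact ((hm measurableSet_Ioo).inter (hm measurableSet_Iic))
  · exact (hm (measurableSet_singleton 0)).inter (by split <;> simp)
  · exact (hm (measurableSet_singleton 1)).inter (by split <;> simp)

omit hT in
lemma G_compl_null (hatom : ∀ x : ℝ, μ {x} = 0) :
    μ ({x | 0 < μ (Iic x) ∧ μ (Iic x) < 1}ᶜ) = 0 := by
  have hsub : {x | 0 < μ (Iic x) ∧ μ (Iic x) < 1}ᶜ ⊆
      {x | μ (Iic x) = 0} ∪ {x | μ (Iic x) = 1} := by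
    intro x hx
    simp only [mem_compl_iff, mem_setOf_eq, not_and_or, not_lt] at hx
    rcases hx with hx | hx
    · exact Or.inl (le_antisymm hx zero_le)
    · exact Or.inr (le_antisymm (measIic_le_one μ x) hx)
  refine le_antisymm (le_trans (measure_mono hsub) ?_) zero_le
  refine le_trans (measure_union_le _ _) ?_
  rw [meas_levelSet_eq_null hatom zero_le, meas_levelSet_eq_null hatom (le_refl _), add_zero]

include hT

/-- on the good set, `{T ≤ y}` agrees with `{x | μ(Iic x) ≤ ν (Iic y)}` -/
lemma T_preimage_inter (y : ℝ) :
    T ⁻¹' (Iic y) ∩ {x | 0 < μ (Iic x) ∧ μ (Iic x) < 1}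
      = {x | μ (Iic x) ≤ ν (Iic y)} ∩ {x | 0 < μ (Iic x) ∧ μ (Iic x) < 1} := by
  ext x
  simp only [mem_inter_iff, mem_preimage, mem_Iic, mem_setOf_eq]
  constructor
  · rintro ⟨h, hG⟩
    exact ⟨(T_le_iff hT hG.1 hG.2).mp h, hG⟩
  · rintro ⟨h, hG⟩
    exact ⟨(T_le_iff hT hG.1 hG.2).mpr h, hG⟩

lemma map_T (hatom : ∀ x : ℝ, μ {x} = 0) : μ.map T = ν := by
  refine Measure.ext_of_Iic (μ.map T) ν (fun y => ?_)
  rw [Measure.map_apply (measurable_T hT hatom) measurableSet_Iic]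
  calc μ (T ⁻¹' (Iic y))
      = μ (T ⁻¹' (Iic y) ∩ {x | 0 < μ (Iic x) ∧ μ (Iic x) < 1}) :=
        (measure_inter_conull (G_compl_null hatom)).symm
    _ = μ ({x | μ (Iic x) ≤ ν (Iic y)} ∩ {x | 0 < μ (Iic x) ∧ μ (Iic x) < 1}) := by
        rw [T_preimage_inter hT]
    _ = μ {x | μ (Iic x) ≤ ν (Iic y)} := measure_inter_conull (G_compl_null hatom)
    _ = ν (Iic y) := meas_levelSet hatom (measIic_le_one ν y)

omit hT in
/-- layer-cake for the positive-part cost -/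
lemma cost_layer (Θ : ℝ → ℝ) (hΘ : Measurable Θ) (a : ℝ) :
    ∫⁻ x, ENNReal.ofReal (Θ x - x - a) ∂μ
      = ∫⁻ z, μ ({x | x + a ≤ z} ∩ {x | z < Θ x}) ∂(volume) := by
  have hA : MeasurableSet {p : ℝ × ℝ | p.1 + a ≤ p.2 ∧ p.2 < Θ p.1} :=
    (measurableSet_le (measurable_fst.add_const a) measurable_snd).inter
      (measurableSet_lt measurable_snd (hΘ.comp measurable_fst))
  have key : ∀ x : ℝ, ENNReal.ofReal (Θ x - x - a)
      = ∫⁻ z, {p : ℝ × ℝ | p.1 + a ≤ p.2 ∧ p.2 < Θ p.1}.indicator 1 (x, z) ∂(volume) := by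
    intro x
    have h1 : (fun z => ({p : ℝ × ℝ | p.1 + a ≤ p.2 ∧ p.2 < Θ p.1}.indicator 1 (x, z) : ℝ≥0∞))
        = (Ico (x + a) (Θ x)).indicator 1 := by
      ext z
      simp only [indicator_apply, mem_setOf_eq, mem_Ico, Pi.one_apply]
    rw [h1, lintegral_indicator_one measurableSet_Ico, Real.volume_Ico]
    ring_nf
  calc ∫⁻ x, ENNReal.ofReal (Θ x - x - a) ∂μ
      = ∫⁻ x, ∫⁻ z, {p : ℝ × ℝ | p.1 + a ≤ p.2 ∧ p.2 < Θ p.1}.indicator 1 (x, z) ∂(volume) ∂μ := by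
        simp_rw [key]
    _ = ∫⁻ z, ∫⁻ x, {p : ℝ × ℝ | p.1 + a ≤ p.2 ∧ p.2 < Θ p.1}.indicator 1 (x, z) ∂μ ∂(volume) := by
        apply lintegral_lintegral_swap
        exact ((measurable_one.indicator hA).comp measurable_id).aemeasurable
    _ = ∫⁻ z, μ ({x | x + a ≤ z} ∩ {x | z < Θ x}) ∂(volume) := by
        refine lintegral_congr fun z => ?_
        have h2 : (fun x => ({p : ℝ × ℝ | p.1 + a ≤ p.2 ∧ p.2 < Θ p.1}.indicator 1 (x, z) : ℝ≥0∞))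
            = ({x | x + a ≤ z} ∩ {x | z < Θ x}).indicator 1 := by
          ext x
          simp only [indicator_apply, mem_setOf_eq, mem_inter_iff, Pi.one_apply]
        rw [h2]
        exact lintegral_indicator_one
          ((measurableSet_le (measurable_add_const a) measurable_const).inter
            (measurableSet_lt measurable_const hΘ))

omit hT in
/-- layer-cake for the negative-part cost -/
lemma cost_layer_neg (Θ : ℝ → ℝ) (hΘ : Measurable Θ) (a : ℝ) :
    ∫⁻ x, ENNReal.ofReal (x + a - Θ x) ∂μ
      = ∫⁻ z, μ ({x | Θ x ≤ z} ∩ {x | z < x + a}) ∂(volume) := by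
  have hA : MeasurableSet {p : ℝ × ℝ | Θ p.1 ≤ p.2 ∧ p.2 < p.1 + a} :=
    (measurableSet_le (hΘ.comp measurable_fst) measurable_snd).inter
      (measurableSet_lt measurable_snd (measurable_fst.add_const a))
  have key : ∀ x : ℝ, ENNReal.ofReal (x + a - Θ x)
      = ∫⁻ z, {p : ℝ × ℝ | Θ p.1 ≤ p.2 ∧ p.2 < p.1 + a}.indicator 1 (x, z) ∂(volume) := by
    intro x
    have h1 : (fun z => ({p : ℝ × ℝ | Θ p.1 ≤ p.2 ∧ p.2 < p.1 + a}.indicator 1 (x, z) : ℝ≥0∞))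
        = (Ico (Θ x) (x + a)).indicator 1 := by
      ext z
      simp only [indicator_apply, mem_setOf_eq, mem_Ico, Pi.one_apply]
    rw [h1, lintegral_indicator_one measurableSet_Ico, Real.volume_Ico]
  calc ∫⁻ x, ENNReal.ofReal (x + a - Θ x) ∂μ
      = ∫⁻ x, ∫⁻ z, {p : ℝ × ℝ | Θ p.1 ≤ p.2 ∧ p.2 < p.1 + a}.indicator 1 (x, z) ∂(volume) ∂μ := by
        simp_rw [key]
    _ = ∫⁻ z, ∫⁻ x, {p : ℝ × ℝ | Θ p.1 ≤ p.2 ∧ p.2 < p.1 + a}.indicator 1 (x, z) ∂μ ∂(volume) := by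
        apply lintegral_lintegral_swap
        exact ((measurable_one.indicator hA).comp measurable_id).aemeasurable
    _ = ∫⁻ z, μ ({x | Θ x ≤ z} ∩ {x | z < x + a}) ∂(volume) := by
        refine lintegral_congr fun z => ?_
        have h2 : (fun x => ({p : ℝ × ℝ | Θ p.1 ≤ p.2 ∧ p.2 < p.1 + a}.indicator 1 (x, z) : ℝ≥0∞))
            = ({x | Θ x ≤ z} ∩ {x | z < x + a}).indicator 1 := by
          ext x
          simp only [indicator_apply, mem_setOf_eq, mem_inter_iff, Pi.one_apply]
        rw [h2]
        exact lintegral_indicator_one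
          ((measurableSet_le hΘ measurable_const).inter
            (measurableSet_lt measurable_const (measurable_add_const a)))

omit hT in
lemma psi_lb (ψ : ℝ → ℝ) (hψ : Measurable ψ) {ν : Measure ℝ} (hmap : μ.map ψ = ν)
    (a z : ℝ) :
    μ (Iic (z-a)) - ν (Iic z) ≤ μ ({x | x + a ≤ z} ∩ {x | z < ψ x}) := by
  rw [tsub_le_iff_right]
  have hB : MeasurableSet {x | z < ψ x} := measurableSet_lt measurable_const hψ
  have hAeq : {x : ℝ | x + a ≤ z} = Iic (z - a) := by
    ext x; simp only [mem_setOf_eq, mem_Iic]; constructor <;> intro <;> linarith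
  have h1 : μ ({x | x + a ≤ z} ∩ {x | z < ψ x}) + μ ({x | x + a ≤ z} \ {x | z < ψ x})
      = μ {x | x + a ≤ z} := measure_inter_add_diff _ hB
  have h2 : μ ({x | x + a ≤ z} \ {x | z < ψ x}) ≤ ν (Iic z) := by
    have hsub : {x : ℝ | x + a ≤ z} \ {x | z < ψ x} ⊆ ψ ⁻¹' (Iic z) := by
      intro x hx
      simp only [mem_diff, mem_setOf_eq, not_lt] at hx
      exact hx.2
    calc μ ({x | x + a ≤ z} \ {x | z < ψ x}) ≤ μ (ψ ⁻¹' (Iic z)) := measure_mono hsub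
    _ = ν (Iic z) := by rw [← hmap, Measure.map_apply hψ measurableSet_Iic]
  calc μ (Iic (z-a)) = μ {x : ℝ | x + a ≤ z} := by rw [hAeq]
  _ = μ ({x | x + a ≤ z} ∩ {x | z < ψ x}) + μ ({x | x + a ≤ z} \ {x | z < ψ x}) := h1.symm
  _ ≤ μ ({x | x + a ≤ z} ∩ {x | z < ψ x}) + ν (Iic z) := add_le_add le_rfl h2

omit hT in
lemma psi_lb_neg (ψ : ℝ → ℝ) (hψ : Measurable ψ) {ν : Measure ℝ} (hmap : μ.map ψ = ν)
    (a z : ℝ) :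
    ν (Iic z) - μ (Iic (z-a)) ≤ μ ({x | ψ x ≤ z} ∩ {x | z < x + a}) := by
  rw [tsub_le_iff_right]
  have hW : MeasurableSet {x : ℝ | z < x + a} :=
    measurableSet_lt measurable_const (measurable_add_const a)
  have h1 : μ ({x | ψ x ≤ z} ∩ {x | z < x + a}) + μ ({x | ψ x ≤ z} \ {x | z < x + a})
      = μ {x | ψ x ≤ z} := measure_inter_add_diff _ hW
  have h2 : μ ({x | ψ x ≤ z} \ {x | z < x + a}) ≤ μ (Iic (z-a)) := by
    refine measure_mono fun x hx => ?_
    simp only [mem_diff, mem_setOf_eq, not_lt] at hx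
    simp only [mem_Iic]
    linarith [hx.2]
  calc ν (Iic z) = μ {x | ψ x ≤ z} := by
        rw [← hmap, Measure.map_apply hψ measurableSet_Iic]; rfl
  _ = μ ({x | ψ x ≤ z} ∩ {x | z < x + a}) + μ ({x | ψ x ≤ z} \ {x | z < x + a}) := h1.symm
  _ ≤ μ ({x | ψ x ≤ z} ∩ {x | z < x + a}) + μ (Iic (z-a)) := add_le_add le_rfl h2

lemma T_ub (hatom : ∀ x : ℝ, μ {x} = 0) (a z : ℝ) :
    μ ({x | x + a ≤ z} ∩ {x | z < T x}) ≤ μ (Iic (z-a)) - ν (Iic z) := by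
  set c := ν (Iic z) with hc
  rcases le_or_gt (μ (Iic (z-a))) c with hle | hlt
  · -- the set is null
    have hsub : {x | x + a ≤ z} ∩ {x | z < T x} ⊆ {x | 0 < μ (Iic x) ∧ μ (Iic x) < 1}ᶜ := by
      rintro x ⟨hxA, hxB⟩
      simp only [mem_setOf_eq] at hxA hxB
      intro hG
      have hmono : μ (Iic x) ≤ μ (Iic (z - a)) := measIic_mono μ (by linarith)
      have hTle : T x ≤ z := (T_le_iff hT hG.1 hG.2).mpr (le_trans hmono hle)
      linarith
    calc μ ({x | x + a ≤ z} ∩ {x | z < T x}) ≤ μ ({x | 0 < μ (Iic x) ∧ μ (Iic x) < 1}ᶜ) :=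
          measure_mono hsub
    _ = 0 := G_compl_null hatom
    _ ≤ _ := zero_le
  · apply ENNReal.le_sub_of_add_le_right (ne_top_of_le_ne_top ENNReal.one_ne_top (measIic_le_one ν z))
    set D := {x : ℝ | μ (Iic x) ≤ c} with hD
    have hDsub : D ⊆ Iic (z-a) := by
      intro x hx
      simp only [hD, mem_setOf_eq] at hx
      by_contra hcon
      simp only [mem_Iic, not_le] at hcon
      exact absurd (le_trans (measIic_mono μ hcon.le) hx) (not_le.mpr hlt)
    have hsub : {x | x + a ≤ z} ∩ {x | z < T x} ⊆
        (Iic (z-a) \ D) ∪ {x | 0 < μ (Iic x) ∧ μ (Iic x) < 1}ᶜ := by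
      rintro x ⟨hxA, hxB⟩
      simp only [mem_setOf_eq] at hxA hxB
      by_cases hG : 0 < μ (Iic x) ∧ μ (Iic x) < 1
      · left
        refine ⟨by simp only [mem_Iic]; linarith, fun hxD => ?_⟩
        have : T x ≤ z := (T_le_iff hT hG.1 hG.2).mpr hxD
        linarith
      · right; exact hG
    have h0 : μ ({x | x + a ≤ z} ∩ {x | z < T x}) ≤ μ (Iic (z-a) \ D) := by
      calc μ ({x | x + a ≤ z} ∩ {x | z < T x})
          ≤ μ ((Iic (z-a) \ D) ∪ {x | 0 < μ (Iic x) ∧ μ (Iic x) < 1}ᶜ) := measure_mono hsub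
      _ ≤ μ (Iic (z-a) \ D) + μ ({x | 0 < μ (Iic x) ∧ μ (Iic x) < 1}ᶜ) := measure_union_le _ _
      _ = μ (Iic (z-a) \ D) := by rw [G_compl_null hatom, add_zero]
    have hDmeas : MeasurableSet D := measIic_measurable μ measurableSet_Iic
    have hDc : μ D = c := meas_levelSet hatom (measIic_le_one ν z)
    calc μ ({x | x + a ≤ z} ∩ {x | z < T x}) + c
        ≤ μ (Iic (z-a) \ D) + μ D := add_le_add h0 hDc.ge
    _ = μ (Iic (z-a) \ D) + μ (Iic (z-a) ∩ D) := by
        rw [inter_eq_self_of_subset_right hDsub]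
    _ = μ (Iic (z-a)) := measure_diff_add_inter _ hDmeas

lemma T_ub_neg (hatom : ∀ x : ℝ, μ {x} = 0) (a z : ℝ) :
    μ ({x | T x ≤ z} ∩ {x | z < x + a}) ≤ ν (Iic z) - μ (Iic (z-a)) := by
  set c := ν (Iic z) with hc
  have hcle : c ≤ 1 := measIic_le_one ν z
  rcases le_or_gt c (μ (Iic (z-a))) with hle | hlt
  · -- the set is contained in {Eμ = c} ∪ Gᶜ, both null
    have hsub : {x | T x ≤ z} ∩ {x | z < x + a} ⊆
        {x | μ (Iic x) = c} ∪ {x | 0 < μ (Iic x) ∧ μ (Iic x) < 1}ᶜ := by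
      rintro x ⟨hxB, hxW⟩
      simp only [mem_setOf_eq] at hxB hxW
      by_cases hG : 0 < μ (Iic x) ∧ μ (Iic x) < 1
      · left
        have h1 : μ (Iic x) ≤ c := (T_le_iff hT hG.1 hG.2).mp hxB
        have h2 : μ (Iic (z-a)) ≤ μ (Iic x) := measIic_mono μ (by linarith)
        exact le_antisymm h1 (le_trans hle h2)
      · right; exact hG
    calc μ ({x | T x ≤ z} ∩ {x | z < x + a})
        ≤ μ ({x | μ (Iic x) = c} ∪ {x | 0 < μ (Iic x) ∧ μ (Iic x) < 1}ᶜ) := measure_mono hsub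
    _ ≤ μ {x | μ (Iic x) = c} + μ ({x | 0 < μ (Iic x) ∧ μ (Iic x) < 1}ᶜ) := measure_union_le _ _
    _ = 0 := by rw [meas_levelSet_eq_null hatom hcle, G_compl_null hatom, add_zero]
    _ ≤ _ := zero_le
  · apply ENNReal.le_sub_of_add_le_right (measure_ne_top μ _)
    set D := {x : ℝ | μ (Iic x) ≤ c} with hD
    have hDmeas : MeasurableSet D := measIic_measurable μ measurableSet_Iic
    have hWmeas : MeasurableSet {x : ℝ | z < x + a} :=
      measurableSet_lt measurable_const (measurable_add_const a)
    have hIicD : Iic (z-a) ⊆ D := by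
      intro x hx
      simp only [mem_Iic] at hx
      exact le_trans (measIic_mono μ hx) hlt.le
    have hsub : {x | T x ≤ z} ∩ {x | z < x + a} ⊆
        (D ∩ {x | z < x + a}) ∪ {x | 0 < μ (Iic x) ∧ μ (Iic x) < 1}ᶜ := by
      rintro x ⟨hxB, hxW⟩
      simp only [mem_setOf_eq] at hxB hxW
      by_cases hG : 0 < μ (Iic x) ∧ μ (Iic x) < 1
      · exact Or.inl ⟨(T_le_iff hT hG.1 hG.2).mp hxB, hxW⟩
      · exact Or.inr hG
    have h0 : μ ({x | T x ≤ z} ∩ {x | z < x + a}) ≤ μ (D ∩ {x | z < x + a}) := by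
      calc μ ({x | T x ≤ z} ∩ {x | z < x + a})
          ≤ μ ((D ∩ {x | z < x + a}) ∪ {x | 0 < μ (Iic x) ∧ μ (Iic x) < 1}ᶜ) :=
            measure_mono hsub
      _ ≤ μ (D ∩ {x | z < x + a}) + μ ({x | 0 < μ (Iic x) ∧ μ (Iic x) < 1}ᶜ) :=
            measure_union_le _ _
      _ = μ (D ∩ {x | z < x + a}) := by rw [G_compl_null hatom, add_zero]
    have hdiff : μ (Iic (z-a)) ≤ μ (D \ {x | z < x + a}) := by
      refine measure_mono fun x hx => ?_
      simp only [mem_Iic] at hx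
      refine ⟨hIicD hx, ?_⟩
      simp only [mem_setOf_eq, not_lt]
      linarith
    calc μ ({x | T x ≤ z} ∩ {x | z < x + a}) + μ (Iic (z-a))
        ≤ μ (D ∩ {x | z < x + a}) + μ (D \ {x | z < x + a}) := add_le_add h0 hdiff
    _ = μ D := measure_inter_add_diff _ hWmeas
    _ = c := meas_levelSet hatom hcle

/-- The key comparison: the monotone map has the smallest hockey-stick costs. -/
lemma cost_compare (hatom : ∀ x : ℝ, μ {x} = 0)
    (ψ : ℝ → ℝ) (hψ : Measurable ψ) (hmap : μ.map ψ = ν) (a : ℝ) :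
    ∫⁻ x, ENNReal.ofReal (T x - x - a) ∂μ ≤ ∫⁻ x, ENNReal.ofReal (ψ x - x - a) ∂μ := by
  rw [cost_layer (μ := μ) T (measurable_T hT hatom) a, cost_layer (μ := μ) ψ hψ a]
  refine lintegral_mono fun z => ?_
  exact le_trans (T_ub hT hatom a z) (psi_lb ψ hψ hmap a z)

lemma cost_compare_neg (hatom : ∀ x : ℝ, μ {x} = 0)
    (ψ : ℝ → ℝ) (hψ : Measurable ψ) (hmap : μ.map ψ = ν) (a : ℝ) :
    ∫⁻ x, ENNReal.ofReal (x + a - T x) ∂μ ≤ ∫⁻ x, ENNReal.ofReal (x + a - ψ x) ∂μ := by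
  rw [cost_layer_neg (μ := μ) T (measurable_T hT hatom) a, cost_layer_neg (μ := μ) ψ hψ a]
  refine lintegral_mono fun z => ?_
  exact le_trans (T_ub_neg hT hatom a z) (psi_lb_neg ψ hψ hmap a z)

end T

section Convex
variable {h : ℝ → ℝ} (hcvx : ConvexOn ℝ Set.univ h)

noncomputable def rderiv (h : ℝ → ℝ) (s : ℝ) : ℝ := sInf (slope h s '' Ioi s)

include hcvx

lemma cont_of_convexOn : Continuous h := by
  have := hcvx.continuousOn isOpen_univ
  rwa [← continuousOn_univ]

lemma slope_bddBelow (s : ℝ) : BddBelow (slope h s '' Ioi s) := by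
  refine ⟨(h s - h (s-1))/(s - (s-1)), ?_⟩
  rintro b ⟨u, hu, rfl⟩
  rw [slope_def_field]
  exact hcvx.slope_mono_adjacent (mem_univ _) (mem_univ _) (by linarith) hu

lemma slope_nonempty (s : ℝ) : (slope h s '' Ioi s).Nonempty :=
  ⟨slope h s (s + 1), ⟨s + 1, by simp, rfl⟩⟩

omit hcvx in
lemma rderiv_def (s : ℝ) : rderiv h s = sInf (slope h s '' Ioi s) := rfl

lemma rderiv_le_slope {s u : ℝ} (hsu : s < u) : rderiv h s ≤ slope h s u :=
  csInf_le (slope_bddBelow hcvx s) ⟨u, hsu, rfl⟩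

lemma slope_le_rderiv {s u : ℝ} (hsu : s < u) : slope h s u ≤ rderiv h u := by
  refine le_csInf (slope_nonempty hcvx u) ?_
  rintro b ⟨w, hw, rfl⟩
  rw [slope_def_field, slope_def_field]
  exact hcvx.slope_mono_adjacent (mem_univ _) (mem_univ _) hsu hw

lemma rderiv_mono : Monotone (rderiv h) := by
  intro s s' hss'
  rcases eq_or_lt_of_le hss' with rfl | hlt
  · exact le_rfl
  · exact le_trans (rderiv_le_slope hcvx hlt) (slope_le_rderiv hcvx hlt)

lemma support_line (t : ℝ) : h 0 + rderiv h 0 * t ≤ h t := by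
  rcases lt_trichotomy t 0 with ht | rfl | ht
  · have h1 := slope_le_rderiv hcvx ht
    rw [slope_def_field] at h1
    rw [div_le_iff₀ (by linarith : (0:ℝ) < 0 - t)] at h1
    nlinarith
  · simp
  · have h1 := rderiv_le_slope hcvx ht
    rw [slope_def_field] at h1
    rw [le_div_iff₀ (by linarith : (0:ℝ) < t - 0)] at h1
    nlinarith

lemma hasDerivWithinAt_rderiv (s : ℝ) : HasDerivWithinAt h (rderiv h s) (Ioi s) s := by
  rw [hasDerivWithinAt_iff_tendsto_slope]
  have hd : Ioi s \ {s} = Ioi s := diff_singleton_eq_self (fun hs => lt_irrefl s hs)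
  rw [hd]
  have hmono : MonotoneOn (slope h s) (Ioi s) := by
    intro u hu u' hu' huu'
    rw [slope_def_field, slope_def_field]
    exact hcvx.secant_mono (mem_univ _) (mem_univ _) (mem_univ _)
      (ne_of_gt hu) (ne_of_gt hu') huu'
  exact hmono.tendsto_nhdsGT (slope_bddBelow hcvx s)

lemma rderiv_rightLim (s : ℝ) : Function.rightLim (rderiv h) s = rderiv h s := by
  refine le_antisymm ?_ ((rderiv_mono hcvx).le_rightLim le_rfl)
  refine le_csInf (slope_nonempty hcvx s) ?_
  rintro b ⟨u, hu, rfl⟩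
  have hcont := cont_of_convexOn hcvx
  have htend : Tendsto (fun w => slope h w u) (𝓝[>] s) (𝓝 (slope h s u)) := by
    have heq : (fun w => slope h w u) = fun w => (h u - h w)/(u - w) := by
      funext w; rw [slope_def_field]
    have hc : ContinuousAt (fun w => slope h w u) s := by
      rw [heq]
      exact ContinuousAt.div (continuousAt_const.sub hcont.continuousAt)
        (continuousAt_const.sub continuousAt_id) (sub_ne_zero.mpr (ne_of_gt hu))
    exact hc.continuousWithinAt.tendsto
  refine ge_of_tendsto htend ?_
  filter_upwards [Ioo_mem_nhdsGT_of_mem ⟨le_refl s, hu⟩] with w hw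
  exact le_trans ((rderiv_mono hcvx).rightLim_le hw.1) (rderiv_le_slope hcvx hw.2)

lemma ftc (a b : ℝ) (hab : a ≤ b) : ∫ s in a..b, rderiv h s = h b - h a := by
  refine intervalIntegral.integral_eq_sub_of_hasDeriv_right_of_le hab
    ((cont_of_convexOn hcvx).continuousOn) (fun x _ => hasDerivWithinAt_rderiv hcvx x) ?_
  exact (rderiv_mono hcvx).intervalIntegrable

lemma sigma_Ioc (a b : ℝ) :
    ((rderiv_mono hcvx).stieltjesFunction).measure (Ioc a b)
      = ENNReal.ofReal (rderiv h b - rderiv h a) := by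
  rw [StieltjesFunction.measure_Ioc, Monotone.stieltjesFunction_eq,
    Monotone.stieltjesFunction_eq, rderiv_rightLim hcvx, rderiv_rightLim hcvx]

set_option maxHeartbeats 1000000 in
lemma key_rep (t : ℝ) :
    ENNReal.ofReal (h t - h 0 - rderiv h 0 * t)
      = (∫⁻ a in Ioi (0:ℝ), ENNReal.ofReal (t - a)
            ∂((rderiv_mono hcvx).stieltjesFunction).measure)
        + (∫⁻ a in Iic (0:ℝ), ENNReal.ofReal (a - t)
            ∂((rderiv_mono hcvx).stieltjesFunction).measure) := by
  set σm := ((rderiv_mono hcvx).stieltjesFunction).measure with hσm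
  have hgint : ∀ u v : ℝ, IntegrableOn (rderiv h) (Ioc u v) volume :=
    fun u v => ((rderiv_mono hcvx).intervalIntegrable (a := u) (b := v)).1
  rcases le_or_gt 0 t with ht | ht
  · -- t ≥ 0
    have hzero : (∫⁻ a in Iic (0:ℝ), ENNReal.ofReal (a - t) ∂σm) = 0 := by
      rw [setLIntegral_congr_fun_ae measurableSet_Iic
        (ae_of_all _ (fun a (ha : a ∈ Iic (0:ℝ)) => ?_)), lintegral_zero]
      exact ENNReal.ofReal_eq_zero.mpr (by simp only [mem_Iic] at ha; linarith)
    rw [hzero, add_zero]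
    have hB : MeasurableSet {p : ℝ × ℝ | p.1 ≤ p.2 ∧ p.2 < t} :=
      (measurableSet_le measurable_fst measurable_snd).inter
        (measurableSet_lt measurable_snd measurable_const)
    calc ENNReal.ofReal (h t - h 0 - rderiv h 0 * t)
        = ENNReal.ofReal (∫ s in Ioc 0 t, (rderiv h s - rderiv h 0)) := by
          congr 1
          have hI : ∫ s in Ioc 0 t, rderiv h s = h t - h 0 := by
            rw [← intervalIntegral.integral_of_le ht]; exact ftc hcvx 0 t ht
          rw [integral_sub (hgint 0 t) ((integrableOn_const_iff).mpr (Or.inr (by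
            rw [Real.volume_Ioc]; exact ENNReal.ofReal_lt_top))), hI, setIntegral_const]
          rw [Real.volume_real_Ioc_of_le ht, smul_eq_mul]
          ring
      _ = ∫⁻ s in Ioc 0 t, ENNReal.ofReal (rderiv h s - rderiv h 0) ∂volume := by
          refine ofReal_integral_eq_lintegral_ofReal ?_ ?_
          · exact (hgint 0 t).sub ((integrableOn_const_iff).mpr (Or.inr (by
              rw [Real.volume_Ioc]; exact ENNReal.ofReal_lt_top)))
          · exact (ae_restrict_of_forall_mem measurableSet_Ioc
              (fun s hs => sub_nonneg.mpr (rderiv_mono hcvx hs.1.le)))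
      _ = ∫⁻ s in Ioo 0 t, ENNReal.ofReal (rderiv h s - rderiv h 0) ∂volume :=
          (setLIntegral_congr Ioo_ae_eq_Ioc).symm
      _ = ∫⁻ s in Ioo 0 t, σm (Ioc 0 s) ∂volume := by
          refine setLIntegral_congr_fun_ae measurableSet_Ioo (ae_of_all _ fun s _ => ?_)
          rw [sigma_Ioc hcvx]
      _ = ∫⁻ s, (Ioo 0 t).indicator (fun s => σm (Ioc 0 s)) s ∂volume := by
          rw [lintegral_indicator measurableSet_Ioo]
      _ = ∫⁻ s, ∫⁻ a, {p : ℝ × ℝ | p.1 ≤ p.2 ∧ p.2 < t}.indicator 1 (a, s)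
            ∂(σm.restrict (Ioi 0)) ∂volume := by
          refine lintegral_congr fun s => ?_
          by_cases hst : s < t
          · have h2 : (fun a => ({p : ℝ × ℝ | p.1 ≤ p.2 ∧ p.2 < t}.indicator 1 (a, s) : ℝ≥0∞))
                = (Iic s).indicator 1 := by
              ext a
              simp only [indicator_apply, mem_setOf_eq, mem_Iic, hst, and_true, Pi.one_apply]
            rw [h2, lintegral_indicator_one measurableSet_Iic,
              Measure.restrict_apply measurableSet_Iic]
            have h3 : Iic s ∩ Ioi 0 = Ioc 0 s := by
              ext a; simp only [mem_inter_iff, mem_Iic, mem_Ioi, mem_Ioc]; tauto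
            rw [h3]
            by_cases hs0 : 0 < s
            · rw [indicator_of_mem (mem_Ioo.mpr ⟨hs0, hst⟩)]
            · rw [indicator_of_notMem (fun hmem => hs0 (mem_Ioo.mp hmem).1)]
              rw [Ioc_eq_empty hs0, measure_empty]
          · have h2 : (fun a => ({p : ℝ × ℝ | p.1 ≤ p.2 ∧ p.2 < t}.indicator 1 (a, s) : ℝ≥0∞))
                = fun _ => 0 := by
              ext a
              simp only [indicator_apply, mem_setOf_eq, hst, and_false, if_false]
            rw [h2, lintegral_zero, indicator_of_notMem (fun hmem => hst (mem_Ioo.mp hmem).2)]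
      _ = ∫⁻ a, ∫⁻ s, {p : ℝ × ℝ | p.1 ≤ p.2 ∧ p.2 < t}.indicator 1 (a, s)
            ∂volume ∂(σm.restrict (Ioi 0)) := by
          refine (lintegral_lintegral_swap ?_).symm
          exact (measurable_one.indicator hB).aemeasurable
      _ = ∫⁻ a in Ioi (0:ℝ), ENNReal.ofReal (t - a) ∂σm := by
          refine lintegral_congr fun a => ?_
          have h2 : (fun s => ({p : ℝ × ℝ | p.1 ≤ p.2 ∧ p.2 < t}.indicator 1 (a, s) : ℝ≥0∞))
              = (Ico a t).indicator 1 := by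
            ext s
            simp only [indicator_apply, mem_setOf_eq, mem_Ico, Pi.one_apply]
          rw [h2, lintegral_indicator_one measurableSet_Ico, Real.volume_Ico]
  · -- t < 0
    have hzero : (∫⁻ a in Ioi (0:ℝ), ENNReal.ofReal (t - a) ∂σm) = 0 := by
      rw [setLIntegral_congr_fun_ae measurableSet_Ioi
        (ae_of_all _ (fun a (ha : a ∈ Ioi (0:ℝ)) => ?_)), lintegral_zero]
      exact ENNReal.ofReal_eq_zero.mpr (by simp only [mem_Ioi] at ha; linarith)
    rw [hzero, zero_add]
    have hB : MeasurableSet {p : ℝ × ℝ | t ≤ p.2 ∧ p.2 < p.1} :=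
      (measurableSet_le measurable_const measurable_snd).inter
        (measurableSet_lt measurable_snd measurable_fst)
    calc ENNReal.ofReal (h t - h 0 - rderiv h 0 * t)
        = ENNReal.ofReal (∫ s in Ioc t 0, (rderiv h 0 - rderiv h s)) := by
          congr 1
          have hI : ∫ s in Ioc t 0, rderiv h s = h 0 - h t := by
            rw [← intervalIntegral.integral_of_le ht.le]; exact ftc hcvx t 0 ht.le
          rw [integral_sub ((integrableOn_const_iff).mpr (Or.inr (by
            rw [Real.volume_Ioc]; exact ENNReal.ofReal_lt_top)) :
              IntegrableOn (fun _ : ℝ => rderiv h 0) (Ioc t 0) volume) (hgint t 0), hI, setIntegral_const]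
          rw [Real.volume_real_Ioc_of_le ht.le, smul_eq_mul]
          ring
      _ = ∫⁻ s in Ioc t 0, ENNReal.ofReal (rderiv h 0 - rderiv h s) ∂volume := by
          refine ofReal_integral_eq_lintegral_ofReal ?_ ?_
          · exact ((integrableOn_const_iff).mpr (Or.inr (by
              rw [Real.volume_Ioc]; exact ENNReal.ofReal_lt_top))).sub (hgint t 0)
          · exact (ae_restrict_of_forall_mem measurableSet_Ioc
              (fun s hs => sub_nonneg.mpr (rderiv_mono hcvx hs.2)))
      _ = ∫⁻ s in Ico t 0, ENNReal.ofReal (rderiv h 0 - rderiv h s) ∂volume :=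
          (setLIntegral_congr Ico_ae_eq_Ioc).symm
      _ = ∫⁻ s in Ico t 0, σm (Ioc s 0) ∂volume := by
          refine setLIntegral_congr_fun_ae measurableSet_Ico (ae_of_all _ fun s _ => ?_)
          rw [sigma_Ioc hcvx]
      _ = ∫⁻ s, (Ico t 0).indicator (fun s => σm (Ioc s 0)) s ∂volume := by
          rw [lintegral_indicator measurableSet_Ico]
      _ = ∫⁻ s, ∫⁻ a, {p : ℝ × ℝ | t ≤ p.2 ∧ p.2 < p.1}.indicator 1 (a, s)
            ∂(σm.restrict (Iic 0)) ∂volume := by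
          refine lintegral_congr fun s => ?_
          by_cases hts : t ≤ s
          · have h2 : (fun a => ({p : ℝ × ℝ | t ≤ p.2 ∧ p.2 < p.1}.indicator 1 (a, s) : ℝ≥0∞))
                = (Ioi s).indicator 1 := by
              ext a
              simp only [indicator_apply, mem_setOf_eq, mem_Ioi, hts, true_and, Pi.one_apply]
            rw [h2, lintegral_indicator_one measurableSet_Ioi,
              Measure.restrict_apply measurableSet_Ioi]
            have h3 : Ioi s ∩ Iic 0 = Ioc s 0 := by
              ext a; simp only [mem_inter_iff, mem_Iic, mem_Ioi, mem_Ioc]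
            rw [h3]
            by_cases hs0 : s < 0
            · rw [indicator_of_mem (mem_Ico.mpr ⟨hts, hs0⟩)]
            · rw [indicator_of_notMem (fun hmem => hs0 (mem_Ico.mp hmem).2)]
              rw [Ioc_eq_empty hs0, measure_empty]
          · have h2 : (fun a => ({p : ℝ × ℝ | t ≤ p.2 ∧ p.2 < p.1}.indicator 1 (a, s) : ℝ≥0∞))
                = fun _ => 0 := by
              ext a
              simp only [indicator_apply, mem_setOf_eq, hts, false_and, if_false]
            rw [h2, lintegral_zero, indicator_of_notMem (fun hmem => hts (mem_Ico.mp hmem).1)]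
      _ = ∫⁻ a, ∫⁻ s, {p : ℝ × ℝ | t ≤ p.2 ∧ p.2 < p.1}.indicator 1 (a, s)
            ∂volume ∂(σm.restrict (Iic 0)) := by
          refine (lintegral_lintegral_swap ?_).symm
          exact (measurable_one.indicator hB).aemeasurable
      _ = ∫⁻ a in Iic (0:ℝ), ENNReal.ofReal (a - t) ∂σm := by
          refine lintegral_congr fun a => ?_
          have h2 : (fun s => ({p : ℝ × ℝ | t ≤ p.2 ∧ p.2 < p.1}.indicator 1 (a, s) : ℝ≥0∞))
              = (Ico t a).indicator 1 := by
            ext s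
            simp only [indicator_apply, mem_setOf_eq, mem_Ico, Pi.one_apply]
          rw [h2, lintegral_indicator_one measurableSet_Ico, Real.volume_Ico]

end Convex

section Rep
variable {μ : Measure ℝ} [IsProbabilityMeasure μ] {h : ℝ → ℝ} (hcvx : ConvexOn ℝ Set.univ h)

include hcvx

set_option maxHeartbeats 800000 in
lemma rep_cost (Θ : ℝ → ℝ) (hΘ : Measurable Θ) :
    ∫⁻ x, ENNReal.ofReal (h (Θ x - x) - h 0 - rderiv h 0 * (Θ x - x)) ∂μ
      = (∫⁻ a in Ioi (0:ℝ), (∫⁻ x, ENNReal.ofReal (Θ x - x - a) ∂μ)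
            ∂((rderiv_mono hcvx).stieltjesFunction).measure)
        + (∫⁻ a in Iic (0:ℝ), (∫⁻ x, ENNReal.ofReal (x + a - Θ x) ∂μ)
            ∂((rderiv_mono hcvx).stieltjesFunction).measure) := by
  set σm := ((rderiv_mono hcvx).stieltjesFunction).measure with hσm
  have hm1 : Measurable (Function.uncurry fun x a => ENNReal.ofReal (Θ x - x - a)) := by
    apply Measurable.ennreal_ofReal
    exact (((hΘ.comp measurable_fst).sub measurable_fst).sub measurable_snd)
  have hm2 : Measurable (Function.uncurry fun x a => ENNReal.ofReal (x + a - Θ x)) := by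
    apply Measurable.ennreal_ofReal
    exact ((measurable_fst.add measurable_snd).sub (hΘ.comp measurable_fst))
  calc ∫⁻ x, ENNReal.ofReal (h (Θ x - x) - h 0 - rderiv h 0 * (Θ x - x)) ∂μ
      = ∫⁻ x, ((∫⁻ a in Ioi (0:ℝ), ENNReal.ofReal ((Θ x - x) - a) ∂σm)
          + (∫⁻ a in Iic (0:ℝ), ENNReal.ofReal (a - (Θ x - x)) ∂σm)) ∂μ :=
        lintegral_congr fun x => key_rep hcvx (Θ x - x)
    _ = (∫⁻ x, (∫⁻ a in Ioi (0:ℝ), ENNReal.ofReal ((Θ x - x) - a) ∂σm) ∂μ)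
        + (∫⁻ x, (∫⁻ a in Iic (0:ℝ), ENNReal.ofReal (a - (Θ x - x)) ∂σm) ∂μ) := by
        apply lintegral_add_left
        exact Measurable.lintegral_prod_right hm1
    _ = (∫⁻ a in Ioi (0:ℝ), (∫⁻ x, ENNReal.ofReal (Θ x - x - a) ∂μ) ∂σm)
        + (∫⁻ a in Iic (0:ℝ), (∫⁻ x, ENNReal.ofReal (x + a - Θ x) ∂μ) ∂σm) := by
        congr 1
        · exact lintegral_lintegral_swap hm1.aemeasurable
        · rw [lintegral_lintegral_swap]
          · refine lintegral_congr fun a => lintegral_congr fun x => ?_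
            congr 1
            ring
          · exact ((measurable_snd.sub ((hΘ.comp measurable_fst).sub
              measurable_fst))).ennreal_ofReal.aemeasurable

end Rep

end MROpt


open MROpt

set_option maxHeartbeats 1000000 in
/-- **Optimality of the monotone rearrangement in one dimension.**
If `μ, ν` are Borel probability measures on `ℝ` with finite first moments, `μ` has
no atoms, and `T` is the monotone nondecreasing rearrangement
`T x = inf { y | ν(−∞, y] ≥ μ(−∞, x] }`, then `T_#μ = ν` and `T` minimizes
`∫ h(ψ x − x) dμ` over transport maps `ψ`, for every convex `h : ℝ → [0,∞)`. -/
theorem monotone_rearrangement_optimal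
    (μ ν : Measure ℝ) [IsProbabilityMeasure μ] [IsProbabilityMeasure ν]
    (hμ1 : ∫⁻ x, ENNReal.ofReal |x| ∂μ < ⊤)
    (hν1 : ∫⁻ y, ENNReal.ofReal |y| ∂ν < ⊤)
    (hatom : ∀ x : ℝ, μ {x} = 0)
    (T : ℝ → ℝ)
    (hT : ∀ x, T x = sInf {y : ℝ | μ (Set.Iic x) ≤ ν (Set.Iic y)}) :
    Measurable T ∧ μ.map T = ν ∧
    ∀ h : ℝ → ℝ, ConvexOn ℝ Set.univ h → (∀ t, 0 ≤ h t) →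
      ∀ ψ : ℝ → ℝ, Measurable ψ → μ.map ψ = ν →
        ∫⁻ x, ENNReal.ofReal (h (T x - x)) ∂μ ≤
          ∫⁻ x, ENNReal.ofReal (h (ψ x - x)) ∂μ := by
  have hTmeas : Measurable T := measurable_T hT hatom
  have hTmap : μ.map T = ν := map_T hT hatom
  refine ⟨hTmeas, hTmap, ?_⟩
  intro h hcvx hpos ψ hψ hψmap
  have habs : ∀ x : ℝ, (‖x‖₊ : ℝ≥0∞) = ENNReal.ofReal |x| :=
    fun x => Real.enorm_eq_ofReal_abs x
  have hx_int : Integrable (fun x : ℝ => x) μ := by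
    refine ⟨measurable_id.aestronglyMeasurable, ?_⟩
    show (∫⁻ x, (‖x‖₊ : ℝ≥0∞) ∂μ) < ⊤
    simpa only [habs] using hμ1
  have hθint : ∀ (Θ : ℝ → ℝ), Measurable Θ → μ.map Θ = ν → Integrable Θ μ := by
    intro Θ hm hmap
    refine ⟨hm.aestronglyMeasurable, ?_⟩
    show (∫⁻ x, (‖Θ x‖₊ : ℝ≥0∞) ∂μ) < ⊤
    have hmap' : ∫⁻ x, ENNReal.ofReal |Θ x| ∂μ = ∫⁻ y, ENNReal.ofReal |y| ∂ν := by
      rw [← hmap, lintegral_map (continuous_abs.measurable.ennreal_ofReal) hm]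
    simp_rw [habs]
    rw [hmap']
    exact hν1
  have hTint : Integrable T μ := hθint T hTmeas hTmap
  have hψint : Integrable ψ μ := hθint ψ hψ hψmap
  have hmean : ∀ (Θ : ℝ → ℝ), Measurable Θ → μ.map Θ = ν →
      ∫ x, Θ x ∂μ = ∫ y, y ∂ν := by
    intro Θ hm hmap
    rw [← hmap]
    exact (integral_map hm.aemeasurable aestronglyMeasurable_id).symm
  have hcont : Continuous h := cont_of_convexOn hcvx
  have hLint : ∀ (Θ : ℝ → ℝ), Integrable Θ μ →
      Integrable (fun x => h 0 + rderiv h 0 * (Θ x - x)) μ :=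
    fun Θ hint => by
      have h1 : Integrable (fun x => Θ x - x) μ := hint.sub hx_int
      have h2 : Integrable (fun x => rderiv h 0 * (Θ x - x)) μ := h1.const_mul _
      exact (integrable_const (h 0)).add h2
  rcases eq_or_ne (∫⁻ x, ENNReal.ofReal (h (ψ x - x)) ∂μ) ⊤ with htop | htop
  · rw [htop]; exact le_top
  have hhψmeas : Measurable fun x => h (ψ x - x) :=
    hcont.measurable.comp (hψ.sub measurable_id)
  have hhψint : Integrable (fun x => h (ψ x - x)) μ := by
    refine ⟨hhψmeas.aestronglyMeasurable, ?_⟩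
    show (∫⁻ x, (‖h (ψ x - x)‖₊ : ℝ≥0∞) ∂μ) < ⊤
    have he : ∀ x, (‖h (ψ x - x)‖₊ : ℝ≥0∞) = ENNReal.ofReal (h (ψ x - x)) :=
      fun x => Real.enorm_eq_ofReal (hpos _)
    simp_rw [he]
    exact lt_top_iff_ne_top.mpr htop
  have hsupp : ∀ t, 0 ≤ h t - h 0 - rderiv h 0 * t := fun t => by
    have := support_line hcvx t; linarith
  have hφψint : Integrable (fun x => h (ψ x - x) - h 0 - rderiv h 0 * (ψ x - x)) μ := by
    have heq : (fun x => h (ψ x - x) - h 0 - rderiv h 0 * (ψ x - x))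
        = fun x => h (ψ x - x) - (h 0 + rderiv h 0 * (ψ x - x)) := funext fun x => by ring
    rw [heq]
    exact hhψint.sub (hLint ψ hψint)
  have hJψ : ∫⁻ x, ENNReal.ofReal (h (ψ x - x) - h 0 - rderiv h 0 * (ψ x - x)) ∂μ
      = ENNReal.ofReal (∫ x, (h (ψ x - x) - h 0 - rderiv h 0 * (ψ x - x)) ∂μ) :=
    (ofReal_integral_eq_lintegral_ofReal hφψint (ae_of_all _ fun x => hsupp _)).symm
  have hJcomp : ∫⁻ x, ENNReal.ofReal (h (T x - x) - h 0 - rderiv h 0 * (T x - x)) ∂μ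
      ≤ ∫⁻ x, ENNReal.ofReal (h (ψ x - x) - h 0 - rderiv h 0 * (ψ x - x)) ∂μ := by
    rw [rep_cost hcvx T hTmeas, rep_cost hcvx ψ hψ]
    exact add_le_add
      (lintegral_mono fun a => cost_compare hT hatom ψ hψ hψmap a)
      (lintegral_mono fun a => cost_compare_neg hT hatom ψ hψ hψmap a)
  have hφTmeas : Measurable fun x => h (T x - x) - h 0 - rderiv h 0 * (T x - x) :=
    ((hcont.measurable.comp (hTmeas.sub measurable_id)).sub measurable_const).sub
      (measurable_const.mul (hTmeas.sub measurable_id))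
  have hJT : ∫⁻ x, ENNReal.ofReal (h (T x - x) - h 0 - rderiv h 0 * (T x - x)) ∂μ < ⊤ :=
    lt_of_le_of_lt hJcomp (by rw [hJψ]; exact ENNReal.ofReal_lt_top)
  have hφTint : Integrable (fun x => h (T x - x) - h 0 - rderiv h 0 * (T x - x)) μ := by
    refine ⟨hφTmeas.aestronglyMeasurable, ?_⟩
    show (∫⁻ x, (‖h (T x - x) - h 0 - rderiv h 0 * (T x - x)‖₊ : ℝ≥0∞) ∂μ) < ⊤
    have he : ∀ x, (‖h (T x - x) - h 0 - rderiv h 0 * (T x - x)‖₊ : ℝ≥0∞)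
        = ENNReal.ofReal (h (T x - x) - h 0 - rderiv h 0 * (T x - x)) :=
      fun x => Real.enorm_eq_ofReal (hsupp _)
    simp_rw [he]
    exact hJT
  have hJT_eq : ∫⁻ x, ENNReal.ofReal (h (T x - x) - h 0 - rderiv h 0 * (T x - x)) ∂μ
      = ENNReal.ofReal (∫ x, (h (T x - x) - h 0 - rderiv h 0 * (T x - x)) ∂μ) :=
    (ofReal_integral_eq_lintegral_ofReal hφTint (ae_of_all _ fun x => hsupp _)).symm
  have hrealφ : ∫ x, (h (T x - x) - h 0 - rderiv h 0 * (T x - x)) ∂μ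
      ≤ ∫ x, (h (ψ x - x) - h 0 - rderiv h 0 * (ψ x - x)) ∂μ := by
    have h1 := hJcomp
    rw [hJT_eq, hJψ] at h1
    exact (ENNReal.ofReal_le_ofReal_iff (integral_nonneg fun x => hsupp _)).mp h1
  have hLeq : ∫ x, (h 0 + rderiv h 0 * (T x - x)) ∂μ
      = ∫ x, (h 0 + rderiv h 0 * (ψ x - x)) ∂μ := by
    have e1 : ∀ (Θ : ℝ → ℝ), Measurable Θ → μ.map Θ = ν → Integrable Θ μ →
        ∫ x, (h 0 + rderiv h 0 * (Θ x - x)) ∂μ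
          = h 0 + rderiv h 0 * ((∫ y, y ∂ν) - ∫ x, x ∂μ) := by
      intro Θ hm hmap hint
      have h1 : Integrable (fun x => Θ x - x) μ := hint.sub hx_int
      have h2 : Integrable (fun x => rderiv h 0 * (Θ x - x)) μ := h1.const_mul _
      rw [integral_add (integrable_const _) h2, integral_const, integral_const_mul]
      have hsub : ∫ x, (Θ x - x) ∂μ = (∫ y, y ∂ν) - ∫ x, x ∂μ := by
        rw [integral_sub hint hx_int, hmean Θ hm hmap]
      rw [hsub]
      simp [measure_univ]
    rw [e1 T hTmeas hTmap hTint, e1 ψ hψ hψmap hψint]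
  have hhTint : Integrable (fun x => h (T x - x)) μ := by
    have heq : (fun x => h (T x - x))
        = fun x => (h (T x - x) - h 0 - rderiv h 0 * (T x - x))
            + (h 0 + rderiv h 0 * (T x - x)) := funext fun x => by ring
    rw [heq]
    exact hφTint.add (hLint T hTint)
  have hfinal_real : ∫ x, h (T x - x) ∂μ ≤ ∫ x, h (ψ x - x) ∂μ := by
    calc ∫ x, h (T x - x) ∂μ
        = (∫ x, (h (T x - x) - h 0 - rderiv h 0 * (T x - x)) ∂μ)
          + ∫ x, (h 0 + rderiv h 0 * (T x - x)) ∂μ := by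
          rw [← integral_add hφTint (hLint T hTint)]
          exact integral_congr_ae (Filter.Eventually.of_forall fun x => by ring)
      _ ≤ (∫ x, (h (ψ x - x) - h 0 - rderiv h 0 * (ψ x - x)) ∂μ)
          + ∫ x, (h 0 + rderiv h 0 * (ψ x - x)) ∂μ := add_le_add hrealφ (le_of_eq hLeq)
      _ = ∫ x, h (ψ x - x) ∂μ := by
          rw [← integral_add hφψint (hLint ψ hψint)]
          exact integral_congr_ae (Filter.Eventually.of_forall fun x => by ring)
  calc ∫⁻ x, ENNReal.ofReal (h (T x - x)) ∂μ
      = ENNReal.ofReal (∫ x, h (T x - x) ∂μ) :=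
        (ofReal_integral_eq_lintegral_ofReal hhTint (ae_of_all _ fun x => hpos _)).symm
    _ ≤ ENNReal.ofReal (∫ x, h (ψ x - x) ∂μ) := ENNReal.ofReal_le_ofReal hfinal_real
    _ = ∫⁻ x, ENNReal.ofReal (h (ψ x - x)) ∂μ :=
      ofReal_integral_eq_lintegral_ofReal hhψint (ae_of_all _ fun x => hpos _)
end
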